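/- arXiv:2405.17173 — 9 statements merged into one kernel-verified Lean document; each statement's English description precedes it below -/
import Mathlib

section
/- There exists an uncountable subset E of the full shift Σ_2 = {0,1}^ℕ such that for any two distinct points s = (s_n), t = (t_n) in E, we have s_n = t_n for infinitely many n and s_m ≠ t_m for infinitely many m. -/
private noncomputable def f3 (a : ℕ → Fin 2) : ℕ → Fin 2 :=
  fun n => if (Nat.unpair n).1 = 0 then 0 else a ((Nat.unpair n).1 - 1)

private lemma fiber_infinite (i : ℕ) : {n : ℕ | (Nat.unpair n).1 = i}.Infinite := by
  apply Set.infinite_of_injective_forall_mem (f := fun j => Nat.pair i j)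
  · intro j1 j2 h
    simpa [Nat.pair_eq_pair] using h
  · intro j; simp [Nat.unpair_pair]

private lemma f3_inj : Function.Injective f3 := by
  intro a b h
  funext k
  have := congrFun h (Nat.pair (k + 1) 0)
  simpa [f3, Nat.unpair_pair] using this

theorem stmt_3 :
    ∃ E : Set (ℕ → Fin 2), ¬E.Countable ∧
      ∀ s ∈ E, ∀ t ∈ E, s ≠ t →
        {n : ℕ | s n = t n}.Infinite ∧ {m : ℕ | s m ≠ t m}.Infinite := by
  refine ⟨Set.range f3, ?_, ?_⟩
  · intro hc
    have : Countable (Set.range f3) := hc.to_subtype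
    have hcnt : Countable (ℕ → Fin 2) := (Equiv.ofInjective f3 f3_inj).countable_iff.mpr this
    obtain ⟨g, hg⟩ := exists_surjective_nat (ℕ → Fin 2)
    obtain ⟨m, hm⟩ := hg (fun n => 1 - g n n)
    have := congrFun hm m
    revert this
    exact (by decide : ∀ x : Fin 2, ¬ x = 1 - x) _
  · rintro s ⟨a, rfl⟩ t ⟨b, rfl⟩ hst
    have hab : a ≠ b := fun h => hst (by rw [h])
    obtain ⟨k, hk⟩ := Function.ne_iff.mp hab
    constructor
    · apply (fiber_infinite 0).mono
      intro n hn
      simp only [Set.mem_setOf_eq] at hn ⊢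
      simp [f3, hn]
    · apply (fiber_infinite (k + 1)).mono
      intro n hn
      simp only [Set.mem_setOf_eq] at hn ⊢
      simp [f3, hn, hk]
end

section
/- Let (X,d) be a compact metric space, (f_n) continuous self-maps, x,y ∈ X, ε > 0, and N ∈ ℕ. If liminf_{n→∞} (1/n)·#{0 ≤ i ≤ n−1 : d(f_1^i(x), f_1^i(y)) < ε} = 0, then liminf_{m→∞} (1/m)·#{0 ≤ i ≤ m−1 : d(f_1^{Ni}(x), f_1^{Ni}(y)) < ε} = 0. -/
open Filter
open scoped Classical

variable {X : Type*}

/-- `orb f n = f_n ∘ ⋯ ∘ f_1` (0-based: `f k` is the `(k+1)`-st map). -/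
def orb (f : ℕ → X → X) : ℕ → X → X
  | 0 => id
  | n + 1 => f n ∘ orb f n

theorem stmt_5 [MetricSpace X] [CompactSpace X] (f : ℕ → X → X)
    (hf : ∀ n, Continuous (f n)) (x y : X) (ε : ℝ) (hε : 0 < ε)
    (N : ℕ) (hN : 0 < N)
    (h : liminf (fun n =>
        (((Finset.range n).filter
          (fun i => dist (orb f i x) (orb f i y) < ε)).card : ℝ) / n) atTop = 0) :
    liminf (fun m =>
        (((Finset.range m).filter
          (fun i => dist (orb f (N * i) x) (orb f (N * i) y) < ε)).card : ℝ) / m) atTop = 0 := by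
  classical
  set P : ℕ → Prop := fun i => dist (orb f i x) (orb f i y) < ε with hP
  set A : ℕ → ℕ := fun n => ((Finset.range n).filter P).card with hA
  set B : ℕ → ℕ := fun m => ((Finset.range m).filter (fun i => P (N * i))).card with hB
  -- key counting facts
  have key1 : ∀ m, B m ≤ A (N * m) := by
    intro m
    apply Finset.card_le_card_of_injOn (fun i => N * i)
    · intro i hi
      simp only [Finset.mem_coe, Finset.mem_filter, Finset.mem_range] at hi ⊢
      exact ⟨(Nat.mul_lt_mul_left hN).mpr hi.1, hi.2⟩
    · intro a _ b _ hab
      exact Nat.eq_of_mul_eq_mul_left hN hab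
  have key2 : ∀ n m, n ≤ N * m → A (N * m) ≤ A n + (N * m - n) := by
    intro n m hnm
    have hsub : (Finset.range (N * m)).filter P ⊆
        (Finset.range n).filter P ∪ Finset.Ico n (N * m) := by
      intro i hi
      simp only [Finset.mem_filter, Finset.mem_range, Finset.mem_union, Finset.mem_Ico] at hi ⊢
      rcases lt_or_ge i n with h' | h'
      · exact Or.inl ⟨h', hi.2⟩
      · exact Or.inr ⟨h', hi.1⟩
    calc A (N * m) ≤ ((Finset.range n).filter P ∪ Finset.Ico n (N * m)).card :=
          Finset.card_le_card hsub
      _ ≤ A n + (Finset.Ico n (N * m)).card := Finset.card_union_le _ _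
      _ = A n + (N * m - n) := by rw [Nat.card_Ico]
  -- boundedness facts
  have hBnonneg : ∀ m : ℕ, (0 : ℝ) ≤ (B m : ℝ) / m := fun m => by positivity
  have hAle : ∀ n : ℕ, (A n : ℝ) / n ≤ 1 := by
    intro n
    rcases Nat.eq_zero_or_pos n with rfl | hn
    · simp
    · rw [div_le_one (by exact_mod_cast hn)]
      exact_mod_cast (Finset.card_filter_le _ _).trans_eq (Finset.card_range n)
  have hAcobound : IsCoboundedUnder (· ≥ ·) atTop (fun n => (A n : ℝ) / n) :=
    (isBoundedUnder_of ⟨1, fun n => hAle n⟩).isCoboundedUnder_ge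
  have hBcobound : IsCoboundedUnder (· ≥ ·) atTop (fun m => (B m : ℝ) / m) := by
    refine (isBoundedUnder_of ⟨1, fun m => ?_⟩).isCoboundedUnder_ge
    rcases Nat.eq_zero_or_pos m with rfl | hm
    · simp
    · rw [div_le_one (by exact_mod_cast hm)]
      exact_mod_cast (Finset.card_filter_le _ _).trans_eq (Finset.card_range m)
  apply le_antisymm
  · -- liminf ≤ 0
    apply le_of_forall_pos_le_add
    intro δ hδ
    rw [zero_add]
    apply liminf_le_of_frequently_le _ (isBoundedUnder_of ⟨0, hBnonneg⟩)
    rw [frequently_atTop]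
    intro m₀
    -- get n large with A n / n < δ / (2N)
    have hδ' : (0:ℝ) < δ / (2 * N) := by positivity
    have hfreq : ∃ᶠ n in atTop, (A n : ℝ) / n < δ / (2 * N) :=
      frequently_lt_of_liminf_lt hAcobound (h ▸ hδ')
    rw [frequently_atTop] at hfreq
    obtain ⟨n, hn, hAn⟩ := hfreq (max (N * m₀) (⌈2 * (N:ℝ)^2 / δ⌉₊))
    have hn1 : N * m₀ ≤ n := le_trans (le_max_left _ _) hn
    have hn2 : (2 * (N:ℝ)^2 / δ) ≤ n := by
      calc (2 * (N:ℝ)^2 / δ) ≤ (⌈2 * (N:ℝ)^2 / δ⌉₊ : ℝ) := Nat.le_ceil _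
        _ ≤ n := by exact_mod_cast le_trans (le_max_right _ _) hn
    have hnpos : 0 < n := by
      have : (0:ℝ) < 2 * (N:ℝ)^2 / δ := by positivity
      exact_mod_cast Nat.pos_of_ne_zero (fun h0 => by simp [h0] at hn2; nlinarith)
    set m : ℕ := n / N + 1 with hm
    have hmpos : 0 < m := Nat.succ_pos _
    have hm₀ : m₀ ≤ m := by
      have : m₀ ≤ n / N := (Nat.le_div_iff_mul_le hN).mpr (by rw [Nat.mul_comm]; exact hn1)
      omega
    refine ⟨m, hm₀, ?_⟩
    have hle1 : n ≤ N * m := by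
      calc n ≤ (n / N + 1) * N := le_of_lt ((Nat.div_lt_iff_lt_mul hN).mp (Nat.lt_succ_self _))
        _ = N * m := by ring
    have hle2 : N * m ≤ n + N := by
      have := Nat.div_mul_le_self n N
      calc N * m = n / N * N + N := by ring
        _ ≤ n + N := by omega
    have hBA : B m ≤ A n + N := by
      have := key1 m
      have := key2 n m hle1
      omega
    -- now the real estimate
    have hnR : (0:ℝ) < n := by exact_mod_cast hnpos
    have hmR : (0:ℝ) < m := by exact_mod_cast hmpos
    have hNR : (0:ℝ) < N := by exact_mod_cast hN
    have hnm : (n:ℝ) ≤ N * m := by exact_mod_cast hle1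
    have hBAR : (B m : ℝ) ≤ (A n : ℝ) + N := by exact_mod_cast hBA
    have hAn2 : (A n : ℝ) * (2 * N) < δ * n :=
      (div_lt_div_iff₀ hnR (by positivity)).mp hAn
    have h1 : (B m : ℝ) / m ≤ ((A n : ℝ) + N) * N / n := by
      rw [div_le_div_iff₀ hmR hnR]
      have hAnn : (0:ℝ) ≤ (A n : ℝ) + N := by positivity
      nlinarith [mul_le_mul_of_nonneg_left hnm hAnn]
    have h2 : ((A n : ℝ) + N) * N / n ≤ δ := by
      rw [div_le_iff₀ hnR]
      have : (N:ℝ)^2 ≤ δ / 2 * n := by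
        rw [div_le_iff₀ hδ] at hn2; nlinarith
      nlinarith
    linarith
  · -- 0 ≤ liminf
    exact le_liminf_of_le hBcobound (Eventually.of_forall hBnonneg)
end

section
/- Let (X,d) be a compact metric space and (f_n) continuous self-maps converging uniformly to f. Let x, y ∈ X and N ∈ ℕ. If limsup_{n→∞} (1/n)·#{0 ≤ i ≤ n−1 : d(f_1^i(x), f_1^i(y)) < t} > 0 for all t > 0, then limsup_{m→∞} (1/m)·#{0 ≤ i ≤ m−1 : d(f_1^{Ni}(x), f_1^{Ni}(y)) < t} > 0 for all t > 0. -/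
open Filter
open scoped Classical

variable {X : Type*}

/-- Uniform equicontinuity of the family `{f n}`. -/
lemma equi_aux [MetricSpace X] [CompactSpace X] (f : ℕ → X → X) (g : X → X)
    (hf : ∀ n, Continuous (f n)) (hconv : TendstoUniformly f g atTop)
    {ε : ℝ} (hε : 0 < ε) :
    ∃ δ > 0, ∀ n (a b : X), dist a b < δ → dist (f n a) (f n b) < ε := by
  have hg : Continuous g := hconv.continuous (Frequently.of_forall hf)
  have hgu : UniformContinuous g := CompactSpace.uniformContinuous_of_continuous hg
  obtain ⟨δ₁, hδ₁, hδ₁'⟩ := Metric.uniformContinuous_iff.1 hgu (ε / 3) (by linarith)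
  obtain ⟨M, hM⟩ := (Filter.eventually_atTop).1
    ((Metric.tendstoUniformly_iff.1 hconv (ε / 3) (by linarith)))
  have hfin : ∀ K : ℕ, ∃ δ > 0, ∀ n < K, ∀ a b : X, dist a b < δ → dist (f n a) (f n b) < ε := by
    intro K
    induction K with
    | zero => exact ⟨1, one_pos, by omega⟩
    | succ K ih =>
      obtain ⟨δ, hδ, hδ'⟩ := ih
      have hK : UniformContinuous (f K) := CompactSpace.uniformContinuous_of_continuous (hf K)
      obtain ⟨δ₂, hδ₂, hδ₂'⟩ := Metric.uniformContinuous_iff.1 hK ε hε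
      refine ⟨min δ δ₂, lt_min hδ hδ₂, fun n hn a b hab => ?_⟩
      rcases Nat.lt_succ_iff_lt_or_eq.1 hn with hn' | rfl
      · exact hδ' n hn' a b (hab.trans_le (min_le_left _ _))
      · exact hδ₂' (hab.trans_le (min_le_right _ _))
  obtain ⟨δ₂, hδ₂, hδ₂'⟩ := hfin M
  refine ⟨min δ₁ δ₂, lt_min hδ₁ hδ₂, fun n a b hab => ?_⟩
  rcases lt_or_ge n M with hn | hn
  · exact hδ₂' n hn a b (hab.trans_le (min_le_right _ _))
  · have h1 := hM n hn a
    have h2 := hM n hn b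
    have h3 := hδ₁' (hab.trans_le (min_le_left _ _))
    calc dist (f n a) (f n b)
        ≤ dist (f n a) (g a) + dist (g a) (g b) + dist (g b) (f n b) := dist_triangle4 _ _ _ _
      _ < ε / 3 + ε / 3 + ε / 3 := by
          rw [dist_comm (g a) (f n a)] at h1
          rw [dist_comm (g b) (f n b)] at h2 ⊢
          exact add_lt_add (add_lt_add h1 h3) h2
      _ = ε := by ring

/-- Orbit-closeness propagates for `K` more steps. -/
lemma chain_aux [MetricSpace X] [CompactSpace X] (f : ℕ → X → X) (g : X → X)
    (hf : ∀ n, Continuous (f n)) (hconv : TendstoUniformly f g atTop)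
    {t : ℝ} (ht : 0 < t) (K : ℕ) :
    ∃ ξ, 0 < ξ ∧ ξ ≤ t ∧ ∀ i (a b : X), dist (orb f i a) (orb f i b) < ξ →
      ∀ j ≤ K, dist (orb f (i + j) a) (orb f (i + j) b) < t := by
  induction K with
  | zero =>
    refine ⟨t, ht, le_rfl, fun i a b hab j hj => ?_⟩
    interval_cases j
    simpa using hab
  | succ K ih =>
    obtain ⟨ξ, hξ0, hξt, hξ⟩ := ih
    obtain ⟨δ, hδ0, hδ⟩ := equi_aux f g hf hconv hξ0
    refine ⟨min δ t, lt_min hδ0 ht, min_le_right _ _, fun i a b hab j hj => ?_⟩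
    rcases Nat.eq_zero_or_eq_succ_pred j with rfl | hj'
    · simpa using hab.trans_le (min_le_right _ _)
    · obtain ⟨j', rfl⟩ : ∃ j', j = j' + 1 := ⟨j - 1, hj'⟩
      have hab1 : dist (orb f (i + 1) a) (orb f (i + 1) b) < ξ := by
        show dist (f i (orb f i a)) (f i (orb f i b)) < ξ
        exact hδ i _ _ (hab.trans_le (min_le_left _ _))
      have := hξ (i + 1) a b hab1 j' (by omega)
      convert this using 3 <;> omega

theorem stmt_6 [MetricSpace X] [CompactSpace X] (f : ℕ → X → X) (g : X → X)
    (hf : ∀ n, Continuous (f n)) (hconv : TendstoUniformly f g atTop)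
    (x y : X) (N : ℕ) (hN : 0 < N)
    (h : ∀ t : ℝ, 0 < t →
      0 < limsup (fun n =>
        (((Finset.range n).filter
          (fun i => dist (orb f i x) (orb f i y) < t)).card : ℝ) / n) atTop) :
    ∀ t : ℝ, 0 < t →
      0 < limsup (fun m =>
        (((Finset.range m).filter
          (fun i => dist (orb f (N * i) x) (orb f (N * i) y) < t)).card : ℝ) / m) atTop := by
  intro t ht
  obtain ⟨ξ, hξ0, hξt, hξ⟩ := chain_aux f g hf hconv ht N
  have hL := h ξ hξ0
  set c : ℕ → ℕ := fun n => ((Finset.range n).filter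
    (fun i => dist (orb f i x) (orb f i y) < ξ)).card with hc
  set b : ℕ → ℕ := fun n => ((Finset.range n).filter
    (fun i => dist (orb f (N * i) x) (orb f (N * i) y) < t)).card with hb
  have hL' : 0 < limsup (fun n => (c n : ℝ) / n) atTop := hL
  set φ : ℕ → ℕ := fun i => (i + N - 1) / N with hφdef
  have hφ12 : ∀ i, i ≤ N * φ i ∧ N * φ i ≤ i + N - 1 := by
    intro i
    have h1 : N * ((i + N - 1) / N) + (i + N - 1) % N = i + N - 1 := Nat.div_add_mod _ _
    have h2 : (i + N - 1) % N < N := Nat.mod_lt _ hN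
    have hphi : φ i = (i + N - 1) / N := rfl
    rw [hphi]
    omega
  have hφ3 : ∀ i, φ i ≤ i := by
    intro i
    have hle : i ≤ N * i := Nat.le_mul_of_pos_left i hN
    have h1 : i + N - 1 ≤ N * i + (N - 1) := by omega
    have h2 : (i + N - 1) / N ≤ (N * i + (N - 1)) / N := Nat.div_le_div_right h1
    rw [Nat.mul_add_div hN] at h2
    have h3 : (N - 1) / N = 0 := Nat.div_eq_of_lt (by omega)
    have hphi : φ i = (i + N - 1) / N := rfl
    omega
  -- main counting inequality
  have hkey : ∀ n, c n ≤ N * b n := by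
    intro n
    set S := (Finset.range n).filter (fun i => dist (orb f i x) (orb f i y) < ξ) with hS
    have hfiber : ∀ m ∈ S.image φ, (S.filter (fun i => φ i = m)).card ≤ N := by
      intro m _
      have hsub : S.filter (fun i => φ i = m) ⊆ Finset.Icc (N * m + 1 - N) (N * m) := by
        intro i hi
        simp only [Finset.mem_filter] at hi
        obtain ⟨-, him⟩ := hi
        obtain ⟨h1, h2⟩ := hφ12 i
        rw [him] at h1 h2
        simp only [Finset.mem_Icc]
        omega
      calc (S.filter (fun i => φ i = m)).card ≤ (Finset.Icc (N * m + 1 - N) (N * m)).card :=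
            Finset.card_le_card hsub
        _ ≤ N := by rw [Nat.card_Icc]; omega
    have himg : S.image φ ⊆ (Finset.range n).filter
        (fun i => dist (orb f (N * i) x) (orb f (N * i) y) < t) := by
      intro m hm
      simp only [hS, Finset.mem_image, Finset.mem_filter, Finset.mem_range] at hm ⊢
      obtain ⟨i, ⟨hin, hid⟩, rfl⟩ := hm
      refine ⟨lt_of_le_of_lt (hφ3 i) hin, ?_⟩
      obtain ⟨h1, h2⟩ := hφ12 i
      have hj : N * φ i = i + (N * φ i - i) := by omega
      have hjN : N * φ i - i ≤ N := by omega
      rw [hj]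
      exact hξ i x y hid _ hjN
    calc c n = S.card := rfl
      _ ≤ N * (S.image φ).card := Finset.card_le_mul_card_image S N hfiber
      _ ≤ N * b n := Nat.mul_le_mul_left N (Finset.card_le_card himg)
  -- pass to limsups
  have hNR : (0 : ℝ) < N := by exact_mod_cast hN
  set L := limsup (fun n => (c n : ℝ) / n) atTop with hLdef
  have hcob : IsCoboundedUnder (· ≤ ·) atTop (fun n => (c n : ℝ) / n) :=
    isCoboundedUnder_le_of_le atTop (x := 0) (fun n => by positivity)
  have hfreq : ∃ᶠ n in atTop, L / 2 < (c n : ℝ) / n :=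
    frequently_lt_of_lt_limsup hcob (by linarith)
  have hfreq' : ∃ᶠ n in atTop, L / (2 * N) ≤ (b n : ℝ) / n := by
    refine hfreq.mono fun n hn => ?_
    have hn0 : (0 : ℝ) < n := by
      rcases Nat.eq_zero_or_pos n with rfl | hpos
      · simp at hn; linarith
      · exact_mod_cast hpos
    have h1 : L / 2 * n < (c n : ℝ) := (lt_div_iff₀ hn0).mp hn
    have h2 : (c n : ℝ) ≤ N * b n := by exact_mod_cast hkey n
    rw [div_le_div_iff₀ (by positivity) hn0]
    nlinarith [h1, h2]
  have hbdd : IsBoundedUnder (· ≤ ·) atTop (fun n => (b n : ℝ) / n) := by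
    refine isBoundedUnder_of ⟨1, fun n => ?_⟩
    rcases Nat.eq_zero_or_pos n with rfl | hpos
    · simp
    have hn0 : (0 : ℝ) < n := by exact_mod_cast hpos
    rw [div_le_one hn0]
    have : b n ≤ n := by
      have := Finset.card_filter_le (Finset.range n)
        (fun i => dist (orb f (N * i) x) (orb f (N * i) y) < t)
      simpa using this
    exact_mod_cast this
  have hfinal : L / (2 * N) ≤ limsup (fun n => (b n : ℝ) / n) atTop :=
    le_limsup_of_frequently_le hfreq' hbdd
  have hpos : 0 < L / (2 * N) := by positivity
  exact lt_of_lt_of_le hpos hfinal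
end

section
/- Let (X,d) be a compact metric space and (f_n) a sequence of continuous self-maps converging uniformly to a map f. Then for every N ∈ ℕ, the system (X, f_{1,∞}) is DC2' chaotic if and only if its N-th iterate system (X, f_{1,∞}^{[N]}) is DC2' chaotic. -/
open Filter
open scoped Classical

variable {X : Type*}

/-- Lower distributional density along the time sequence `τ`. -/
noncomputable def phiLow [MetricSpace X] (f : ℕ → X → X) (τ : ℕ → ℕ) (x y : X) (t : ℝ) : ℝ :=
  liminf (fun n =>
    (((Finset.range n).filter
      (fun i => dist (orb f (τ i) x) (orb f (τ i) y) < t)).card : ℝ) / n) atTop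

/-- Upper distributional density along the time sequence `τ`. -/
noncomputable def phiUpp [MetricSpace X] (f : ℕ → X → X) (τ : ℕ → ℕ) (x y : X) (t : ℝ) : ℝ :=
  limsup (fun n =>
    (((Finset.range n).filter
      (fun i => dist (orb f (τ i) x) (orb f (τ i) y) < t)).card : ℝ) / n) atTop

/-- Distributional chaos of type 2' along the time sequence `τ`. -/
def DC2' [MetricSpace X] (f : ℕ → X → X) (τ : ℕ → ℕ) : Prop :=
  ∃ S : Set X, ¬S.Countable ∧ ∀ x ∈ S, ∀ y ∈ S, x ≠ y →
    (∃ ε > 0, phiLow f τ x y ε = 0) ∧ ∀ t : ℝ, 0 < t → 0 < phiUpp f τ x y t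

section helpers
variable [MetricSpace X]

noncomputable def cnt (f : ℕ → X → X) (τ : ℕ → ℕ) (x y : X) (t : ℝ) (n : ℕ) : ℕ :=
  ((Finset.range n).filter
      (fun i => dist (orb f (τ i) x) (orb f (τ i) y) < t)).card

lemma cnt_le (f : ℕ → X → X) (τ : ℕ → ℕ) (x y : X) (t : ℝ) (n : ℕ) :
    cnt f τ x y t n ≤ n :=
  le_trans (Finset.card_filter_le _ _) (le_of_eq (Finset.card_range n))

lemma dens_nonneg (f : ℕ → X → X) (τ : ℕ → ℕ) (x y : X) (t : ℝ) (n : ℕ) :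
    0 ≤ (cnt f τ x y t n : ℝ) / n := by positivity

lemma dens_le_one (f : ℕ → X → X) (τ : ℕ → ℕ) (x y : X) (t : ℝ) (n : ℕ) :
    (cnt f τ x y t n : ℝ) / n ≤ 1 := by
  apply div_le_one_of_le₀
  · exact_mod_cast cnt_le f τ x y t n
  · positivity

lemma bdd_above (f : ℕ → X → X) (τ : ℕ → ℕ) (x y : X) (t : ℝ) :
    IsBoundedUnder (· ≤ ·) atTop (fun n => (cnt f τ x y t n : ℝ) / n) :=
  isBoundedUnder_of ⟨1, fun n => dens_le_one f τ x y t n⟩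

lemma bdd_below (f : ℕ → X → X) (τ : ℕ → ℕ) (x y : X) (t : ℝ) :
    IsBoundedUnder (· ≥ ·) atTop (fun n => (cnt f τ x y t n : ℝ) / n) :=
  isBoundedUnder_of ⟨0, fun n => dens_nonneg f τ x y t n⟩

lemma cnt_mono (f : ℕ → X → X) (τ : ℕ → ℕ) (x y : X) (t : ℝ) {m n : ℕ} (h : m ≤ n) :
    cnt f τ x y t m ≤ cnt f τ x y t n :=
  Finset.card_le_card (Finset.filter_subset_filter _ (Finset.range_subset_range.2 h))

lemma cnt_le_add (f : ℕ → X → X) (τ : ℕ → ℕ) (x y : X) (t : ℝ) {a b : ℕ} (h : a ≤ b) :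
    cnt f τ x y t b ≤ cnt f τ x y t a + (b - a) := by
  unfold cnt
  have : Finset.range b = Finset.range a ∪ Finset.Ico a b := by
    rw [Finset.range_eq_Ico, Finset.range_eq_Ico]
    exact (Finset.Ico_union_Ico_eq_Ico (Nat.zero_le a) h).symm
  rw [this, Finset.filter_union]
  refine le_trans (Finset.card_union_le _ _) ?_
  gcongr
  exact le_trans (Finset.card_filter_le _ _) (le_of_eq (Nat.card_Ico a b))

lemma cnt_sub_le (f : ℕ → X → X) (N : ℕ) (hN : 0 < N) (x y : X) (t : ℝ) (n : ℕ) :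
    cnt f (fun n => N * n) x y t n ≤ cnt f id x y t (N * n) := by
  apply Finset.card_le_card_of_injOn (fun i => N * i)
  · intro i hi
    simp only [Finset.mem_coe, Finset.mem_filter, Finset.mem_range] at hi ⊢
    exact ⟨(Nat.mul_lt_mul_left hN).2 hi.1, hi.2⟩
  · intro a _ b _ hab
    exact Nat.eq_of_mul_eq_mul_left hN hab

end helpers

section equi
variable [MetricSpace X] [CompactSpace X]

lemma eqc (f : ℕ → X → X) (g : X → X) (hf : ∀ n, Continuous (f n))
    (hconv : TendstoUniformly f g atTop) :
    ∀ ε > 0, ∃ δ > 0, ∀ k, ∀ x y : X, dist x y < δ → dist (f k x) (f k y) < ε := by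
  intro ε hε
  have hg : Continuous g := hconv.continuous (Eventually.of_forall hf).frequently
  obtain ⟨δg, hδg, hg3⟩ := Metric.uniformContinuous_iff.1
    (CompactSpace.uniformContinuous_of_continuous hg) (ε/3) (by linarith)
  obtain ⟨K, hK⟩ := eventually_atTop.1
    (Metric.tendstoUniformly_iff.1 hconv (ε/3) (by linarith))
  have hfin : ∀ K : ℕ, ∃ δ > 0, ∀ k < K, ∀ x y : X, dist x y < δ → dist (f k x) (f k y) < ε := by
    intro K
    induction K with
    | zero => exact ⟨1, one_pos, fun k hk => by omega⟩
    | succ M ih =>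
      obtain ⟨δ₀, hδ₀, h₀⟩ := ih
      obtain ⟨δ₁, hδ₁, h₁⟩ := Metric.uniformContinuous_iff.1
        (CompactSpace.uniformContinuous_of_continuous (hf M)) ε hε
      refine ⟨min δ₀ δ₁, lt_min hδ₀ hδ₁, fun k hk x y hd => ?_⟩
      rcases Nat.lt_or_ge k M with h | h
      · exact h₀ k h x y (lt_of_lt_of_le hd (min_le_left _ _))
      · have : k = M := by omega
        subst this
        exact h₁ (lt_of_lt_of_le hd (min_le_right _ _))
  obtain ⟨δ₀, hδ₀, h₀⟩ := hfin K
  refine ⟨min δ₀ δg, lt_min hδ₀ hδg, fun k x y hd => ?_⟩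
  rcases Nat.lt_or_ge k K with h | h
  · exact h₀ k h x y (lt_of_lt_of_le hd (min_le_left _ _))
  · have h1 := hK k h x
    have h2 := hK k h y
    have h3 : dist (g x) (g y) < ε/3 := hg3 (lt_of_lt_of_le hd (min_le_right _ _))
    have h4 := dist_triangle4 (f k x) (g x) (g y) (f k y)
    have e1 : dist (f k x) (g x) = dist (g x) (f k x) := dist_comm _ _
    have e2 : dist (g y) (f k y) = dist (f k y) (g y) := dist_comm _ _
    linarith

lemma block (f : ℕ → X → X) (g : X → X) (hf : ∀ n, Continuous (f n))
    (hconv : TendstoUniformly f g atTop) (N : ℕ) :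
    ∀ ε > 0, ∃ δ, 0 < δ ∧ δ ≤ ε ∧ ∀ j m, m ≤ N → ∀ x y : X,
      dist (orb f j x) (orb f j y) < δ → dist (orb f (j+m) x) (orb f (j+m) y) < ε := by
  induction N with
  | zero =>
    intro ε hε
    refine ⟨ε, hε, le_rfl, fun j m hm x y hd => ?_⟩
    have : m = 0 := Nat.le_zero.1 hm
    subst this
    simpa using hd
  | succ M ih =>
    intro ε hε
    obtain ⟨δ₁, hδ₁, h₁⟩ := eqc f g hf hconv ε hε
    obtain ⟨δ, hδ, hδle, h⟩ := ih (min δ₁ ε) (lt_min hδ₁ hε)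
    refine ⟨δ, hδ, hδle.trans (min_le_right _ _), fun j m hm x y hd => ?_⟩
    rcases Nat.lt_or_ge m (M+1) with hm' | hm'
    · exact lt_of_lt_of_le (h j m (Nat.lt_succ_iff.1 hm') x y hd) (min_le_right _ _)
    · have hm2 : m = M + 1 := by omega
      subst hm2
      have h2 : dist (orb f (j+M) x) (orb f (j+M) y) < δ₁ :=
        lt_of_lt_of_le (h j M le_rfl x y hd) (min_le_left _ _)
      have h3 := h₁ (j+M) _ _ h2
      have hidx : j + (M+1) = (j+M) + 1 := rfl
      rw [hidx]
      exact h3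

end equi

lemma cnt_block [MetricSpace X] (f : ℕ → X → X) (N : ℕ) (hN : 0 < N) (x y : X) (δ t : ℝ)
    (hblk : ∀ j m, m ≤ N → dist (orb f j x) (orb f j y) < δ →
      dist (orb f (j+m) x) (orb f (j+m) y) < t) (q : ℕ) :
    cnt f id x y δ (N * q) ≤ N * (cnt f (fun n => N * n) x y t q + 1) := by
  set A := (Finset.range (N*q)).filter
      (fun j => dist (orb f (id j) x) (orb f (id j) y) < δ) with hA
  have h1 : A.card ≤ N * (A.image (fun j => j / N + 1)).card := by
    apply Finset.card_le_mul_card_image A N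
    intro b _
    have hsub : (A.filter (fun j => j / N + 1 = b)) ⊆ Finset.Ico (N*(b-1)) (N*(b-1)+N) := by
      intro j hj
      simp only [Finset.mem_filter] at hj
      have hb2 : j / N + 1 = b := hj.2
      have hdiv : j / N = b - 1 := by rw [← hb2]; exact (Nat.succ_sub_one _).symm
      have l1 : N * (j / N) ≤ j := Nat.mul_div_le j N
      have l2 : j % N < N := Nat.mod_lt j hN
      have l3 : N * (j/N) + j % N = j := Nat.div_add_mod j N
      rw [Finset.mem_Ico, ← hdiv]
      refine ⟨l1, ?_⟩
      calc j = N * (j/N) + j % N := l3.symm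
        _ < N * (j/N) + N := Nat.add_lt_add_left l2 _
    calc (A.filter (fun j => j / N + 1 = b)).card
        ≤ (Finset.Ico (N*(b-1)) (N*(b-1)+N)).card := Finset.card_le_card hsub
      _ = N := by simp [Nat.card_Ico]
  have h2 : A.image (fun j => j / N + 1) ⊆ (Finset.range (q+1)).filter
      (fun i => dist (orb f (N*i) x) (orb f (N*i) y) < t) := by
    intro b hb
    obtain ⟨j, hj, rfl⟩ := Finset.mem_image.1 hb
    simp only [hA, Finset.mem_filter, Finset.mem_range, id] at hj
    obtain ⟨hjlt, hjd⟩ := hj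
    have l1 : N * (j / N) ≤ j := Nat.mul_div_le j N
    have l2 : j % N < N := Nat.mod_lt j hN
    have l3 : N * (j/N) + j % N = j := Nat.div_add_mod j N
    have hms : N * (j/N + 1) = N * (j/N) + N := by ring
    have hm : N * (j/N + 1) = j + (N - j % N) := by
      rw [hms]
      exact (calc j + (N - j % N) = N * (j/N) + j % N + (N - j % N) := by rw [l3]
        _ = N * (j/N) + (j % N + (N - j % N)) := Nat.add_assoc _ _ _
        _ = N * (j/N) + N := by rw [Nat.add_sub_cancel' (Nat.le_of_lt l2)]).symm
    have hmle : N - j % N ≤ N := by omega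
    have hd := hblk j (N - j % N) hmle hjd
    refine Finset.mem_filter.2 ⟨Finset.mem_range.2 ?_, ?_⟩
    · have : j / N < q := (Nat.div_lt_iff_lt_mul hN).2
        (by rw [Nat.mul_comm q N]; exact hjlt)
      exact Nat.succ_lt_succ this
    · show dist (orb f (N*(j/N+1)) x) (orb f (N*(j/N+1)) y) < t
      rw [hm]; exact hd
  have h3 : ((Finset.range (q+1)).filter
      (fun i => dist (orb f (N*i) x) (orb f (N*i) y) < t)).card
      ≤ cnt f (fun n => N*n) x y t q + 1 := by
    have hsub : (Finset.range (q+1)).filter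
        (fun i => dist (orb f (N*i) x) (orb f (N*i) y) < t)
        ⊆ insert q ((Finset.range q).filter
          (fun i => dist (orb f (N*i) x) (orb f (N*i) y) < t)) := by
      intro i hi
      simp only [Finset.mem_filter, Finset.mem_range] at hi
      rcases Nat.lt_or_ge i q with h | h
      · exact Finset.mem_insert_of_mem (Finset.mem_filter.2 ⟨Finset.mem_range.2 h, hi.2⟩)
      · have : i = q := by omega
        subst this
        exact Finset.mem_insert_self _ _
    refine le_trans (Finset.card_le_card hsub) ?_
    refine le_trans (Finset.card_insert_le _ _) ?_
    have : ((Finset.range q).filter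
        (fun i => dist (orb f (N*i) x) (orb f (N*i) y) < t)).card
        = cnt f (fun n => N*n) x y t q := rfl
    omega
  calc cnt f id x y δ (N*q) = A.card := rfl
    _ ≤ N * (A.image (fun j => j / N + 1)).card := h1
    _ ≤ N * (cnt f (fun n => N*n) x y t q + 1) :=
        Nat.mul_le_mul_left N (le_trans (Finset.card_le_card h2) h3)

section transfer
variable [MetricSpace X]

lemma phiLow_eq (f : ℕ → X → X) (τ : ℕ → ℕ) (x y : X) (t : ℝ) :
    phiLow f τ x y t = liminf (fun n => (cnt f τ x y t n : ℝ) / n) atTop := rfl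

lemma phiUpp_eq (f : ℕ → X → X) (τ : ℕ → ℕ) (x y : X) (t : ℝ) :
    phiUpp f τ x y t = limsup (fun n => (cnt f τ x y t n : ℝ) / n) atTop := rfl

lemma real_le_zero {a : ℝ} (h : ∀ η > 0, a ≤ η) : a ≤ 0 := by
  by_contra h'
  push_neg at h'
  have := h (a/2) (by linarith)
  linarith

lemma nat_le_mul_div_succ {N : ℕ} (hN : 0 < N) (m : ℕ) : m ≤ N * (m / N + 1) :=
  calc m = N * (m/N) + m % N := (Nat.div_add_mod m N).symm
    _ ≤ N * (m/N) + N := Nat.add_le_add_left (Nat.le_of_lt (Nat.mod_lt m hN)) _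
    _ = N * (m/N + 1) := (Nat.mul_succ N (m/N)).symm

lemma nat_mul_div_succ_le (N m : ℕ) : N * (m / N + 1) ≤ m + N :=
  calc N * (m/N + 1) = N * (m/N) + N := Nat.mul_succ N (m/N)
    _ ≤ m + N := Nat.add_le_add_right (Nat.mul_div_le m N) N

lemma tendsto_mulN {N : ℕ} (hN : 0 < N) : Tendsto (fun n => N * n) atTop atTop :=
  tendsto_atTop_mono (fun n => Nat.le_mul_of_pos_left n hN) tendsto_id

lemma tendsto_divN {N : ℕ} (hN : 0 < N) : Tendsto (fun m => m / N + 1) atTop atTop :=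
  tendsto_atTop_atTop.2 fun b => ⟨N * b, fun m hm =>
    le_trans ((Nat.le_div_iff_mul_le hN).2 (by rwa [Nat.mul_comm b N])) (Nat.le_succ _)⟩

lemma low_fwd (f : ℕ → X → X) (N : ℕ) (hN : 0 < N) (x y : X) (ε : ℝ)
    (h : phiLow f id x y ε = 0) : phiLow f (fun n => N * n) x y ε = 0 := by
  have hNR : (0:ℝ) < N := by exact_mod_cast hN
  rw [phiLow_eq] at h ⊢
  refine le_antisymm (real_le_zero fun η hη => ?_)
    (le_liminf_of_le ((bdd_above f _ x y ε).isCoboundedUnder_ge)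
      (Eventually.of_forall fun n => dens_nonneg f _ x y ε n))
  have hη2 : (0:ℝ) < η/(2*N) := by positivity
  have hfreq : ∃ᶠ m in atTop, (cnt f id x y ε m : ℝ)/m < η/(2*N) :=
    frequently_lt_of_liminf_lt ((bdd_above f id x y ε).isCoboundedUnder_ge)
      (by rw [h]; exact hη2)
  obtain ⟨M, hM⟩ := exists_nat_ge (2*(N:ℝ)*N/η)
  have hfar : ∃ᶠ m in atTop,
      (cnt f (fun n => N*n) x y ε (m/N+1) : ℝ)/(m/N+1 : ℕ) ≤ η := by
    refine (hfreq.and_eventually (eventually_ge_atTop (max M 1))).mono ?_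
    rintro m ⟨hm1, hm2⟩
    set q := m / N + 1 with hq
    have hqpos : (0:ℝ) < (q:ℕ) := by positivity
    have hmpos : (0:ℝ) < m := by
      have : 1 ≤ m := le_trans (le_max_right M 1) hm2
      exact_mod_cast this
    -- ℕ facts
    have hmq : m ≤ N * q := nat_le_mul_div_succ hN m
    have hqN : N * q ≤ m + N := nat_mul_div_succ_le N m
    have hcnt : cnt f (fun n => N*n) x y ε q ≤ cnt f id x y ε m + N := by
      refine le_trans (cnt_sub_le f N hN x y ε q) ?_
      refine le_trans (cnt_le_add f id x y ε hmq) ?_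
      exact Nat.add_le_add_left (Nat.sub_le_iff_le_add.2 (by rwa [Nat.add_comm])) _
    -- real arithmetic
    have s1 : (cnt f (fun n => N*n) x y ε q : ℝ) ≤ (cnt f id x y ε m : ℝ) + N := by
      exact_mod_cast hcnt
    have s2 : (cnt f id x y ε m : ℝ) < η/(2*N) * m := (div_lt_iff₀ hmpos).1 hm1
    have hmq' : (m:ℝ) ≤ (N:ℝ) * q := by exact_mod_cast hmq
    have s3 : η/(2*N) * (m:ℝ) ≤ η/(2*N) * ((N:ℝ)*q) :=
      mul_le_mul_of_nonneg_left hmq' (le_of_lt hη2)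
    have s4 : η/(2*N) * ((N:ℝ)*q) = η*(q:ℝ)/2 := by field_simp
    have s5 : 2*(N:ℝ)*N ≤ m*η := by
      have hMm : (M:ℝ) ≤ m := by
        exact_mod_cast le_trans (le_max_left M 1) hm2
      have := le_trans hM hMm
      exact (div_le_iff₀ hη).1 this
    have s6 : η*(m:ℝ) ≤ η*((N:ℝ)*q) := mul_le_mul_of_nonneg_left hmq' (le_of_lt hη)
    have s7 : 2*(N:ℝ) ≤ η*q := by
      refine le_of_mul_le_mul_left ?_ hNR
      nlinarith [s5, s6]
    rw [div_le_iff₀ hqpos]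
    linarith
  have := (tendsto_divN hN).frequently (p := fun q : ℕ =>
    (cnt f (fun n => N*n) x y ε q : ℝ)/q ≤ η) hfar
  exact liminf_le_of_frequently_le this (bdd_below f _ x y ε)

lemma low_bwd (f : ℕ → X → X) (N : ℕ) (hN : 0 < N) (x y : X) (ε δ : ℝ)
    (hblk : ∀ j m, m ≤ N → dist (orb f j x) (orb f j y) < δ →
      dist (orb f (j+m) x) (orb f (j+m) y) < ε)
    (h : phiLow f (fun n => N * n) x y ε = 0) : phiLow f id x y δ = 0 := by
  have hNR : (0:ℝ) < N := by exact_mod_cast hN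
  rw [phiLow_eq] at h ⊢
  refine le_antisymm (real_le_zero fun η hη => ?_)
    (le_liminf_of_le ((bdd_above f id x y δ).isCoboundedUnder_ge)
      (Eventually.of_forall fun n => dens_nonneg f id x y δ n))
  have hη2 : (0:ℝ) < η/2 := by positivity
  have hfreq : ∃ᶠ q in atTop, (cnt f (fun n => N*n) x y ε q : ℝ)/q < η/2 :=
    frequently_lt_of_liminf_lt ((bdd_above f _ x y ε).isCoboundedUnder_ge)
      (by rw [h]; exact hη2)
  obtain ⟨M, hM⟩ := exists_nat_ge (2/η)
  have hfar : ∃ᶠ q in atTop, (cnt f id x y δ (N*q) : ℝ)/(N*q : ℕ) ≤ η := by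
    refine (hfreq.and_eventually (eventually_ge_atTop (max M 1))).mono ?_
    rintro q ⟨hq1, hq2⟩
    have hqpos : (0:ℝ) < q := by
      have : 1 ≤ q := le_trans (le_max_right M 1) hq2
      exact_mod_cast this
    have hNqpos : (0:ℝ) < ((N*q : ℕ):ℝ) := by
      have : 0 < N*q := Nat.mul_pos hN (by exact_mod_cast hqpos)
      exact_mod_cast this
    have hcnt := cnt_block f N hN x y δ ε hblk q
    have s1 : (cnt f id x y δ (N*q) : ℝ) ≤ N*((cnt f (fun n => N*n) x y ε q : ℝ) + 1) := by
      exact_mod_cast hcnt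
    have s2 : (cnt f (fun n => N*n) x y ε q : ℝ) < η/2 * q := (div_lt_iff₀ hqpos).1 hq1
    have s5 : 2 ≤ η*q := by
      have hMm : (M:ℝ) ≤ q := by exact_mod_cast le_trans (le_max_left M 1) hq2
      have := le_trans hM hMm
      have := (div_le_iff₀ hη).1 this
      linarith [this]
    have s6 : (1:ℝ) ≤ η/2*q := by linarith [s5]
    rw [div_le_iff₀ hNqpos]
    have e1 : ((N*q : ℕ):ℝ) = (N:ℝ)*q := by push_cast; ring
    rw [e1]
    have e2 : η*((N:ℝ)*q) = 2*((N:ℝ)*(η/2*q)) := by ring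
    rw [e2]
    nlinarith [s1, s2, s6, hNR]
  have := (tendsto_mulN hN).frequently (p := fun m : ℕ =>
    (cnt f id x y δ m : ℝ)/m ≤ η) hfar
  exact liminf_le_of_frequently_le this (bdd_below f id x y δ)

lemma upp_fwd (f : ℕ → X → X) (N : ℕ) (hN : 0 < N) (x y : X) (t δ : ℝ)
    (hblk : ∀ j m, m ≤ N → dist (orb f j x) (orb f j y) < δ →
      dist (orb f (j+m) x) (orb f (j+m) y) < t)
    (h : 0 < phiUpp f id x y δ) : 0 < phiUpp f (fun n => N * n) x y t := by
  have hNR : (0:ℝ) < N := by exact_mod_cast hN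
  set L := phiUpp f id x y δ with hL
  rw [phiUpp_eq] at hL
  have hfreq : ∃ᶠ m in atTop, L/2 < (cnt f id x y δ m : ℝ)/m :=
    frequently_lt_of_lt_limsup ((bdd_below f id x y δ).isCoboundedUnder_le)
      (by rw [← hL]; linarith)
  obtain ⟨M, hM⟩ := exists_nat_ge ((N:ℝ)*((L/2+1)*4/L))
  have hfar : ∃ᶠ m in atTop,
      L/4 ≤ (cnt f (fun n => N*n) x y t (m/N+1) : ℝ)/(m/N+1 : ℕ) := by
    refine (hfreq.and_eventually (eventually_ge_atTop (max M 1))).mono ?_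
    rintro m ⟨hm1, hm2⟩
    set q := m / N + 1 with hq
    have hqpos : (0:ℝ) < (q:ℕ) := by positivity
    have hmpos : (0:ℝ) < m := by
      have : 1 ≤ m := le_trans (le_max_right M 1) hm2
      exact_mod_cast this
    have hmq : m ≤ N * q := nat_le_mul_div_succ hN m
    have hqN : N * q ≤ m + N := nat_mul_div_succ_le N m
    have hcnt : cnt f id x y δ m ≤ N * (cnt f (fun n => N*n) x y t q + 1) :=
      le_trans (cnt_mono f id x y δ hmq) (cnt_block f N hN x y δ t hblk q)
    have s1 : (cnt f id x y δ m : ℝ) ≤ N*((cnt f (fun n => N*n) x y t q : ℝ) + 1) := by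
      exact_mod_cast hcnt
    have s2 : L/2 * m < (cnt f id x y δ m : ℝ) := (lt_div_iff₀ hmpos).1 hm1
    have s3 : (N:ℝ)*q ≤ (m:ℝ) + N := by exact_mod_cast hqN
    have hmq' : (m:ℝ) ≤ (N:ℝ) * q := by exact_mod_cast hmq
    have s5 : (M:ℝ) ≤ m := by exact_mod_cast le_trans (le_max_left M 1) hm2
    have s6 : (L/2+1)*4/L ≤ (q:ℝ) := by
      refine le_of_mul_le_mul_left ?_ hNR
      calc (N:ℝ)*((L/2+1)*4/L) ≤ M := hM
        _ ≤ m := s5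
        _ ≤ (N:ℝ)*q := hmq'
    have s7 : (L/2+1)*4 ≤ (q:ℝ)*L := (div_le_iff₀ h).1 s6
    have s9 : (N:ℝ)*((L/2)*((q:ℝ)-1)) ≤ (L/2)*m := by
      have e : (N:ℝ)*((L/2)*((q:ℝ)-1)) = (L/2)*((N:ℝ)*q - N) := by ring
      rw [e]
      apply mul_le_mul_of_nonneg_left _ (by linarith : (0:ℝ) ≤ L/2)
      linarith
    have s10 : (N:ℝ)*((L/2)*((q:ℝ)-1)) < (N:ℝ)*((cnt f (fun n => N*n) x y t q : ℝ) + 1) :=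
      lt_of_le_of_lt s9 (lt_of_lt_of_le s2 s1)
    have s8 : (L/2)*((q:ℝ)-1) < (cnt f (fun n => N*n) x y t q : ℝ) + 1 :=
      lt_of_mul_lt_mul_left s10 (le_of_lt hNR)
    rw [le_div_iff₀ hqpos]
    nlinarith [s7, s8]
  have hfr := (tendsto_divN hN).frequently (p := fun q : ℕ =>
    L/4 ≤ (cnt f (fun n => N*n) x y t q : ℝ)/q) hfar
  have := le_limsup_of_frequently_le hfr (bdd_above f _ x y t)
  rw [phiUpp_eq]
  linarith

lemma upp_bwd (f : ℕ → X → X) (N : ℕ) (hN : 0 < N) (x y : X) (t : ℝ)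
    (h : 0 < phiUpp f (fun n => N * n) x y t) : 0 < phiUpp f id x y t := by
  have hNR : (0:ℝ) < N := by exact_mod_cast hN
  set L := phiUpp f (fun n => N * n) x y t with hL
  rw [phiUpp_eq] at hL
  have hfreq : ∃ᶠ n in atTop, L/2 < (cnt f (fun n => N*n) x y t n : ℝ)/n :=
    frequently_lt_of_lt_limsup ((bdd_below f _ x y t).isCoboundedUnder_le)
      (by rw [← hL]; linarith)
  have hfar : ∃ᶠ n in atTop, L/(2*N) ≤ (cnt f id x y t (N*n) : ℝ)/(N*n : ℕ) := by
    refine (hfreq.and_eventually (eventually_ge_atTop 1)).mono ?_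
    rintro n ⟨hn1, hn2⟩
    have hnpos : (0:ℝ) < n := by exact_mod_cast hn2
    have hNnpos : (0:ℝ) < ((N*n : ℕ):ℝ) := by
      have : 0 < N*n := Nat.mul_pos hN hn2
      exact_mod_cast this
    have s1 : (cnt f (fun n => N*n) x y t n : ℝ) ≤ (cnt f id x y t (N*n) : ℝ) := by
      exact_mod_cast cnt_sub_le f N hN x y t n
    have s2 : L/2 * n < (cnt f (fun n => N*n) x y t n : ℝ) := (lt_div_iff₀ hnpos).1 hn1
    rw [le_div_iff₀ hNnpos]
    have e1 : ((N*n : ℕ):ℝ) = (N:ℝ)*n := by push_cast; ring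
    rw [e1]
    have e2 : L/(2*N)*((N:ℝ)*n) = L/2*n := by field_simp
    rw [e2]
    linarith
  have hfr := (tendsto_mulN hN).frequently (p := fun m : ℕ =>
    L/(2*N) ≤ (cnt f id x y t m : ℝ)/m) hfar
  have := le_limsup_of_frequently_le hfr (bdd_above f id x y t)
  rw [phiUpp_eq]
  have : (0:ℝ) < L/(2*N) := by positivity
  linarith [le_limsup_of_frequently_le hfr (bdd_above f id x y t)]

end transfer

theorem stmt_7 [MetricSpace X] [CompactSpace X] (f : ℕ → X → X) (g : X → X)
    (hf : ∀ n, Continuous (f n)) (hconv : TendstoUniformly f g atTop)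
    (N : ℕ) (hN : 0 < N) :
    DC2' f id ↔ DC2' f (fun n => N * n) := by
  have hB := block f g hf hconv N
  constructor
  · rintro ⟨S, hS, hprop⟩
    refine ⟨S, hS, fun x hx y hy hxy => ?_⟩
    obtain ⟨⟨ε, hε, hlow⟩, hupp⟩ := hprop x hx y hy hxy
    refine ⟨⟨ε, hε, low_fwd f N hN x y ε hlow⟩, ?_⟩
    intro t ht
    obtain ⟨δ, hδ, hδle, hblk⟩ := hB t ht
    exact upp_fwd f N hN x y t δ (fun j m hm => hblk j m hm x y) (hupp δ hδ)
  · rintro ⟨S, hS, hprop⟩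
    refine ⟨S, hS, fun x hx y hy hxy => ?_⟩
    obtain ⟨⟨ε, hε, hlow⟩, hupp⟩ := hprop x hx y hy hxy
    obtain ⟨δ, hδ, hδle, hblk⟩ := hB ε hε
    refine ⟨⟨δ, hδ, low_bwd f N hN x y ε δ (fun j m hm => hblk j m hm x y) hlow⟩, ?_⟩
    intro t ht
    exact upp_bwd f N hN x y t (hupp t ht)
end

section
/- Let (X,d) be a compact metric space and (f_n) a sequence of continuous self-maps that is either finitely generated (each f_n belongs to a fixed finite set F of continuous self-maps) or converges uniformly to a map f. If (X, f_{1,∞}) is sensitive, then for every k ∈ ℕ the k-th iterate system (X, f_{1,∞}^{[k]}) is sensitive. -/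
open Filter

variable {X : Type*}

/-- Sensitivity of the non-autonomous system along the time sequence `τ`. -/
def Sensitive [MetricSpace X] (f : ℕ → X → X) (τ : ℕ → ℕ) : Prop :=
  ∃ δ > 0, ∀ U : Set X, IsOpen U → U.Nonempty →
    ∃ x ∈ U, ∃ y ∈ U, ∃ n : ℕ, δ < dist (orb f (τ n) x) (orb f (τ n) y)

/-- Decomposition of the orbit map. -/
lemma orb_add (f : ℕ → X → X) (a b : ℕ) (x : X) :
    orb f (a + b) x = orb (fun j => f (a + j)) b (orb f a x) := by
  induction b with
  | zero => rfl
  | succ b ih =>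
      show orb f ((a + b) + 1) x = _
      simp only [orb, Function.comp_apply, ih]

/-- Uniform equicontinuity of a finite family. -/
lemma aux_finite [MetricSpace X] [CompactSpace X] (F : Set (X → X)) (hF : F.Finite)
    (hc : ∀ g ∈ F, Continuous g) {ε : ℝ} (hε : 0 < ε) :
    ∃ δ > 0, ∀ g ∈ F, ∀ x y : X, dist x y < δ → dist (g x) (g y) < ε := by
  revert hc
  refine Set.Finite.induction_on (motive := fun F _ => (∀ g ∈ F, Continuous g) →
    ∃ δ > 0, ∀ g ∈ F, ∀ x y : X, dist x y < δ → dist (g x) (g y) < ε) F hF ?_ ?_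
  · exact fun _ => ⟨ε, hε, by simp⟩
  · rintro g F hg hFfin ih hc
    obtain ⟨δ₁, hδ₁, h₁⟩ := ih (fun g hg => hc g (Set.mem_insert_of_mem _ hg))
    have hgu : UniformContinuous g :=
      CompactSpace.uniformContinuous_of_continuous (hc g (Set.mem_insert _ _))
    obtain ⟨δ₂, hδ₂, h₂⟩ := Metric.uniformContinuous_iff.1 hgu ε hε
    refine ⟨min δ₁ δ₂, lt_min hδ₁ hδ₂, ?_⟩
    rintro g' (rfl | hg') x y hxy
    · exact h₂ (lt_of_lt_of_le hxy (min_le_right _ _))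
    · exact h₁ g' hg' x y (lt_of_lt_of_le hxy (min_le_left _ _))

/-- Uniform equicontinuity of finitely many maps of the sequence. -/
lemma aux_upto [MetricSpace X] [CompactSpace X] (f : ℕ → X → X)
    (hf : ∀ n, Continuous (f n)) {ε : ℝ} (hε : 0 < ε) (N : ℕ) :
    ∃ δ > 0, ∀ n < N, ∀ x y : X, dist x y < δ → dist (f n x) (f n y) < ε := by
  induction N with
  | zero => exact ⟨ε, hε, by omega⟩
  | succ N ih =>
      obtain ⟨δ₁, hδ₁, h₁⟩ := ih
      obtain ⟨δ₂, hδ₂, h₂⟩ := Metric.uniformContinuous_iff.1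
        (CompactSpace.uniformContinuous_of_continuous (hf N)) ε hε
      refine ⟨min δ₁ δ₂, lt_min hδ₁ hδ₂, ?_⟩
      intro n hn x y hxy
      rcases Nat.lt_succ_iff_lt_or_eq.1 hn with h | rfl
      · exact h₁ n h x y (lt_of_lt_of_le hxy (min_le_left _ _))
      · exact h₂ (lt_of_lt_of_le hxy (min_le_right _ _))

/-- Uniform equicontinuity of the whole family `{f n}` under either assumption. -/
lemma aux_equi [MetricSpace X] [CompactSpace X] (f : ℕ → X → X)
    (hf : ∀ n, Continuous (f n))
    (hgen : (∃ F : Set (X → X), F.Finite ∧ (∀ g ∈ F, Continuous g) ∧ ∀ n, f n ∈ F) ∨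
      (∃ g : X → X, TendstoUniformly f g atTop)) {ε : ℝ} (hε : 0 < ε) :
    ∃ δ > 0, ∀ (n : ℕ) (x y : X), dist x y < δ → dist (f n x) (f n y) < ε := by
  rcases hgen with ⟨F, hFfin, hFc, hmem⟩ | ⟨g, hg⟩
  · obtain ⟨δ, hδ, h⟩ := aux_finite F hFfin hFc hε
    exact ⟨δ, hδ, fun n x y hxy => h (f n) (hmem n) x y hxy⟩
  · have hgc : Continuous g := hg.continuous (Eventually.of_forall hf).frequently
    have hε3 : 0 < ε / 3 := by linarith
    obtain ⟨N, hN⟩ := (Metric.tendstoUniformly_iff.1 hg (ε / 3) hε3).exists_forall_of_atTop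
    obtain ⟨δ₁, hδ₁, h₁⟩ := aux_upto f hf hε N
    obtain ⟨δ₂, hδ₂, h₂⟩ := Metric.uniformContinuous_iff.1
      (CompactSpace.uniformContinuous_of_continuous hgc) (ε / 3) hε3
    refine ⟨min δ₁ δ₂, lt_min hδ₁ hδ₂, ?_⟩
    intro n x y hxy
    rcases lt_or_ge n N with h | h
    · exact h₁ n h x y (lt_of_lt_of_le hxy (min_le_left _ _))
    · have t1 : dist (f n x) (g x) < ε / 3 := dist_comm (g x) (f n x) ▸ hN n h x
      have t2 : dist (g x) (g y) < ε / 3 := h₂ (lt_of_lt_of_le hxy (min_le_right _ _))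
      have t3 : dist (g y) (f n y) < ε / 3 := hN n h y
      calc dist (f n x) (f n y) ≤ dist (f n x) (g x) + dist (g x) (g y) + dist (g y) (f n y) :=
            dist_triangle4 _ _ _ _
        _ < ε := by linarith

/-- Uniform equicontinuity of all segments of length at most `r`. -/
lemma aux_seg [MetricSpace X] [CompactSpace X] (f : ℕ → X → X)
    (hf : ∀ n, Continuous (f n))
    (hgen : (∃ F : Set (X → X), F.Finite ∧ (∀ g ∈ F, Continuous g) ∧ ∀ n, f n ∈ F) ∨
      (∃ g : X → X, TendstoUniformly f g atTop)) (r : ℕ) {ε : ℝ} (hε : 0 < ε) :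
    ∃ δ > 0, ∀ r' ≤ r, ∀ (m : ℕ) (x y : X), dist x y < δ →
      dist (orb (fun j => f (m + j)) r' x) (orb (fun j => f (m + j)) r' y) < ε := by
  induction r generalizing ε with
  | zero =>
      refine ⟨ε, hε, ?_⟩
      intro r' hr' m x y hxy
      interval_cases r'
      simpa [orb] using hxy
  | succ r ih =>
      obtain ⟨δ₁, hδ₁, h₁⟩ := aux_equi f hf hgen hε
      obtain ⟨δ, hδ, h⟩ := ih (lt_min hε hδ₁)
      refine ⟨δ, hδ, ?_⟩
      intro r' hr' m x y hxy
      rcases Nat.lt_succ_iff_lt_or_eq.1 (Nat.lt_succ_of_le hr') with hlt | rfl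
      · exact lt_of_lt_of_le (h r' (Nat.lt_succ_iff.1 hlt) m x y hxy) (min_le_left _ _)
      · have hr : dist (orb (fun j => f (m + j)) r x) (orb (fun j => f (m + j)) r y)
            < min ε δ₁ := h r le_rfl m x y hxy
        have := h₁ (m + r) _ _ (lt_of_lt_of_le hr (min_le_right _ _))
        simpa [orb] using this

theorem stmt_8 [MetricSpace X] [CompactSpace X] (f : ℕ → X → X)
    (hf : ∀ n, Continuous (f n))
    (hgen : (∃ F : Set (X → X), F.Finite ∧ (∀ g ∈ F, Continuous g) ∧ ∀ n, f n ∈ F) ∨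
      (∃ g : X → X, TendstoUniformly f g atTop))
    (hsen : Sensitive f id) (k : ℕ) (hk : 0 < k) :
    Sensitive f (fun n => k * n) := by
  obtain ⟨δ, hδ, hsen⟩ := hsen
  obtain ⟨δ', hδ', hseg⟩ := aux_seg f hf hgen (k - 1) hδ
  refine ⟨δ' / 2, by linarith, ?_⟩
  intro U hU hUne
  obtain ⟨x, hx, y, hy, n, hn⟩ := hsen U hU hUne
  refine ⟨x, hx, y, hy, n / k, ?_⟩
  simp only [id] at hn
  set m := n / k
  set r := n % k
  have hdecomp : k * m + r = n := Nat.div_add_mod n k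
  have hrk : r ≤ k - 1 := by
    have := Nat.mod_lt n hk
    omega
  by_contra hcon
  push_neg at hcon
  have hlt : dist (orb f (k * m) x) (orb f (k * m) y) < δ' := by
    linarith
  have := hseg r hrk (k * m) (orb f (k * m) x) (orb f (k * m) y) hlt
  rw [← orb_add, ← orb_add, hdecomp] at this
  linarith
end

section
/- Let (X,d) be a compact metric space and (f_n) a sequence of continuous self-maps that is either finitely generated or converges uniformly to a map f. If (X, f_{1,∞}) is accessible, then for every k ∈ ℕ the k-th iterate system (X, f_{1,∞}^{[k]}) is accessible. -/
open Filter

variable {X : Type*}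

/-- Accessibility of the non-autonomous system along the time sequence `τ`. -/
def Accessible [MetricSpace X] (f : ℕ → X → X) (τ : ℕ → ℕ) : Prop :=
  ∀ ε : ℝ, 0 < ε → ∀ U V : Set X, IsOpen U → U.Nonempty → IsOpen V → V.Nonempty →
    ∃ x ∈ U, ∃ y ∈ V, ∃ n : ℕ, dist (orb f (τ n) x) (orb f (τ n) y) < ε

/-- Apply `r` maps starting with `f m`. -/
def orbFrom (f : ℕ → X → X) (m : ℕ) : ℕ → X → X
  | 0 => id
  | r + 1 => f (m + r) ∘ orbFrom f m r

lemma orb_add_s9 (f : ℕ → X → X) (n r : ℕ) :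
    orb f (n + r) = orbFrom f n r ∘ orb f n := by
  induction r with
  | zero => rfl
  | succ r ih =>
    show f (n + r) ∘ orb f (n + r) = (f (n + r) ∘ orbFrom f n r) ∘ orb f n
    rw [ih]; rfl

theorem stmt_9 [MetricSpace X] [CompactSpace X] (f : ℕ → X → X)
    (hf : ∀ n, Continuous (f n))
    (hgen : (∃ F : Set (X → X), F.Finite ∧ (∀ g ∈ F, Continuous g) ∧ ∀ n, f n ∈ F) ∨
      (∃ g : X → X, TendstoUniformly f g atTop))
    (hacc : Accessible f id) (k : ℕ) (hk : 0 < k) :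
    Accessible f (fun n => k * n) := by
  -- Uniform equicontinuity of the family `{f n}`.
  have key : ∀ ε : ℝ, 0 < ε → ∃ δ > 0, ∀ n (x y : X),
      dist x y < δ → dist (f n x) (f n y) < ε := by
    intro ε hε
    rcases hgen with ⟨F, hFfin, hFcont, hmem⟩ | ⟨g, hconv⟩
    · -- finitely generated: min over the finite family
      have h1 : ∀ g : X → X, ∃ δ : ℝ, 0 < δ ∧ (g ∈ F →
          ∀ x y : X, dist x y < δ → dist (g x) (g y) < ε) := by
        intro g
        by_cases hg : g ∈ F
        · have hu := CompactSpace.uniformContinuous_of_continuous (hFcont g hg)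
          rw [Metric.uniformContinuous_iff] at hu
          obtain ⟨δ, hδ, h⟩ := hu ε hε
          exact ⟨δ, hδ, fun _ x y hxy => h hxy⟩
        · exact ⟨1, one_pos, fun h => absurd h hg⟩
      choose δf hδfpos hδf using h1
      have hne : hFfin.toFinset.Nonempty := ⟨f 0, hFfin.mem_toFinset.mpr (hmem 0)⟩
      refine ⟨hFfin.toFinset.inf' hne δf, ?_, ?_⟩
      · show (0:ℝ) < _
        rw [Finset.lt_inf'_iff]
        exact fun b _ => hδfpos b
      · intro n x y hxy
        have hle : hFfin.toFinset.inf' hne δf ≤ δf (f n) :=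
          Finset.inf'_le _ (hFfin.mem_toFinset.mpr (hmem n))
        exact hδf (f n) (hmem n) x y (lt_of_lt_of_le hxy hle)
    · -- uniform convergence
      have hgc : Continuous g := hconv.continuous (Eventually.of_forall hf).frequently
      have hgu := CompactSpace.uniformContinuous_of_continuous hgc
      rw [Metric.uniformContinuous_iff] at hgu
      obtain ⟨δg, hδg, hg3⟩ := hgu (ε / 3) (by linarith)
      rw [Metric.tendstoUniformly_iff] at hconv
      obtain ⟨N, hN⟩ := (hconv (ε / 3) (by linarith)).exists_forall_of_atTop
      have h1 : ∀ n : ℕ, ∃ δ : ℝ, 0 < δ ∧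
          ∀ x y : X, dist x y < δ → dist (f n x) (f n y) < ε := by
        intro n
        have hu := CompactSpace.uniformContinuous_of_continuous (hf n)
        rw [Metric.uniformContinuous_iff] at hu
        obtain ⟨δ, hδ, h⟩ := hu ε hε
        exact ⟨δ, hδ, fun x y hxy => h hxy⟩
      choose δn hδnpos hδn using h1
      set δ : ℝ := min δg ((Finset.range (N + 1)).inf' (by simp) δn) with hδdef
      refine ⟨δ, ?_, ?_⟩
      · apply lt_min hδg
        rw [Finset.lt_inf'_iff]
        exact fun b _ => hδnpos b
      · intro n x y hxy
        by_cases hn : n < N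
        · have hle : δ ≤ δn n := le_trans (min_le_right _ _)
            (Finset.inf'_le _ (Finset.mem_range.mpr (by omega)))
          exact hδn n x y (lt_of_lt_of_le hxy hle)
        · have hgxy : dist (g x) (g y) < ε / 3 :=
            hg3 (lt_of_lt_of_le hxy (min_le_left _ _))
          have h1 := hN n (by omega) x
          have h2 := hN n (by omega) y
          calc dist (f n x) (f n y)
              ≤ dist (f n x) (g x) + dist (g x) (g y) + dist (g y) (f n y) :=
                dist_triangle4 _ _ _ _
            _ < ε / 3 + ε / 3 + ε / 3 := by
                rw [dist_comm (f n x) (g x)]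
                exact add_lt_add (add_lt_add h1 hgxy) h2
            _ = ε := by ring
  -- Iterated version: compositions of at most `r` consecutive maps
  have claim : ∀ r : ℕ, ∀ η : ℝ, 0 < η → ∃ δ > 0, δ ≤ η ∧ ∀ m (x y : X),
      dist x y < δ → ∀ s ≤ r, dist (orbFrom f m s x) (orbFrom f m s y) < η := by
    intro r
    induction r with
    | zero =>
      intro η hη
      refine ⟨η, hη, le_refl _, fun m x y hxy s hs => ?_⟩
      interval_cases s
      simpa [orbFrom] using hxy
    | succ r ih =>
      intro η hη
      obtain ⟨δ', hδ', hδ'2⟩ := key η hη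
      obtain ⟨δ, hδ, hδη, hprop⟩ := ih (min δ' η) (lt_min hδ' hη)
      refine ⟨δ, hδ, hδη.trans (min_le_right _ _), fun m x y hxy s hs => ?_⟩
      match s with
      | 0 =>
        simpa [orbFrom] using lt_of_lt_of_le hxy (hδη.trans (min_le_right _ _))
      | t + 1 =>
        have ht : t ≤ r := by omega
        have h2 : dist (orbFrom f m t x) (orbFrom f m t y) < δ' :=
          lt_of_lt_of_le (hprop m x y hxy t ht) (min_le_left _ _)
        simpa [orbFrom] using hδ'2 (m + t) _ _ h2
  -- Main argument
  intro ε hε U V hU hUne hV hVne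
  obtain ⟨δ, hδ, hδε, hprop⟩ := claim k ε hε
  obtain ⟨x, hx, y, hy, n, hn⟩ := hacc δ hδ U V hU hUne hV hVne
  refine ⟨x, hx, y, hy, n / k + 1, ?_⟩
  have hmod := Nat.div_add_mod n k
  have hmlt := Nat.mod_lt n hk
  have hexp : k * (n / k + 1) = k * (n / k) + k := by ring
  set r := k * (n / k + 1) - n with hr
  have hnr : n + r = k * (n / k + 1) := by omega
  have hrk : r ≤ k := by omega
  have horb : orb f (k * (n / k + 1)) = orbFrom f n r ∘ orb f n := by
    rw [← hnr]; exact orb_add_s9 f n r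
  simp only [horb, Function.comp_apply]
  exact hprop n _ _ hn r hrk
end

section
/- There exists a non-autonomous system (X, f_{1,∞}) on a compact metric space such that (X, f_{1,∞}) is DC3 chaotic but its 2nd iterate system (X, f_{1,∞}^{[2]}) is not DC3 chaotic. Concretely, if F : I² → I² is a distributionally chaotic homeomorphism of the unit square and f_i := F^{i+1} for odd i, f_i := F^{−i} for even i, then f_1^{2n} = id for all n, so the 2nd iterate system has all orbit distances constant equal to the initial distance, hence fails DC3, while the original system is DC3. -/
open Filter
open scoped Classical

variable {X : Type*}

/-- Distributional chaos of type 3 along the time sequence `τ`: on some uncountable set,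
lower density is strictly below upper density for all `t` in a nondegenerate interval. -/
def DC3 [MetricSpace X] (f : ℕ → X → X) (τ : ℕ → ℕ) : Prop :=
  ∃ S : Set X, ¬S.Countable ∧ ∀ x ∈ S, ∀ y ∈ S, x ≠ y →
    ∃ c d : ℝ, c < d ∧ ∀ t ∈ Set.Ioo c d, phiLow f τ x y t < phiUpp f τ x y t

/-! ### Auxiliary construction -/

attribute [local instance] PiNat.metricSpace

/-- prepend `false` (an isometric squeeze by factor 1/2). -/
def g0 : (ℕ → Bool) → (ℕ → Bool) := fun x n => Nat.casesOn n false x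

/-- drop the first entry. -/
def h0 : (ℕ → Bool) → (ℕ → Bool) := fun x n => x (n + 1)

/-- "good" times: membership of `n+1` in an odd `4`-adic block. -/
def good (n : ℕ) : Prop := ∃ k, 4 ^ (2 * k + 1) ≤ n + 1 ∧ n + 1 < 4 ^ (2 * k + 2)

/-- The non-autonomous system. -/
noncomputable def F : ℕ → (ℕ → Bool) → (ℕ → Bool) := fun i =>
  if i % 2 = 0 then (if good (i / 2) then g0 else id)
  else (if good (i / 2) then h0 else id)

lemma g0_injective : Function.Injective g0 := by
  intro x y h
  funext n
  exact congrFun h (n + 1)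

lemma firstDiff_g0 (x y : ℕ → Bool) (h : x ≠ y) :
    PiNat.firstDiff (g0 x) (g0 y) = PiNat.firstDiff x y + 1 := by
  have hg : g0 x ≠ g0 y := fun e => h (g0_injective e)
  apply le_antisymm
  · by_contra hlt
    push_neg at hlt
    have := PiNat.apply_eq_of_lt_firstDiff (x := g0 x) (y := g0 y)
      (n := PiNat.firstDiff x y + 1) hlt
    exact PiNat.apply_firstDiff_ne h this
  · by_contra hlt
    push_neg at hlt
    have hne := PiNat.apply_firstDiff_ne hg
    rcases hk : PiNat.firstDiff (g0 x) (g0 y) with _ | k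
    · rw [hk] at hne
      exact hne rfl
    · rw [hk] at hne hlt
      exact hne (PiNat.apply_eq_of_lt_firstDiff (x := x) (y := y)
        (show k < PiNat.firstDiff x y by omega))

lemma dist_g0 (x y : ℕ → Bool) (h : x ≠ y) :
    dist (g0 x) (g0 y) = dist x y / 2 := by
  have hg : g0 x ≠ g0 y := fun e => h (g0_injective e)
  rw [PiNat.dist_eq_of_ne hg, PiNat.dist_eq_of_ne h, firstDiff_g0 x y h, pow_succ]
  ring

lemma F_even (n : ℕ) : F (2 * n) = if good n then g0 else id := by
  have h1 : (2 * n) % 2 = 0 := by omega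
  have h2 : 2 * n / 2 = n := by omega
  simp [F, h1, h2]

lemma F_odd (n : ℕ) : F (2 * n + 1) = if good n then h0 else id := by
  have h1 : ¬((2 * n + 1) % 2 = 0) := by omega
  have h2 : (2 * n + 1) / 2 = n := by omega
  simp [F, h1, h2]

lemma orbF (n : ℕ) :
    orb F (2 * n) = id ∧ orb F (2 * n + 1) = (if good n then g0 else id) := by
  induction n with
  | zero =>
    constructor
    · rfl
    · show F 0 ∘ orb F 0 = _
      have := F_even 0
      simp only [Nat.mul_zero] at this
      rw [show orb F 0 = id from rfl, this]
      rfl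
  | succ n ih =>
    have hodd : orb F (2 * n + 1) = (if good n then g0 else id) := ih.2
    have heven : orb F (2 * (n + 1)) = id := by
      show orb F (2 * n + 1 + 1) = id
      show F (2 * n + 1) ∘ orb F (2 * n + 1) = id
      rw [hodd, F_odd]
      by_cases hg : good n
      · simp only [if_pos hg]
        rfl
      · simp only [if_neg hg]
        rfl
    refine ⟨heven, ?_⟩
    show F (2 * (n + 1)) ∘ orb F (2 * (n + 1)) = _
    rw [heven, F_even]
    by_cases hg : good (n + 1) <;> simp [hg]

lemma orbF_even (n : ℕ) : orb F (2 * n) = id := (orbF n).1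

lemma orbF_odd (n : ℕ) : orb F (2 * n + 1) = (if good n then g0 else id) := (orbF n).2

/-- The combinatorial predicate counting the "close" times. -/
def cp (i : ℕ) : Prop := i % 2 = 1 ∧ good (i / 2)

/-- The combinatorial density sequence. -/
noncomputable def aseq (N : ℕ) : ℝ := (((Finset.range N).filter cp).card : ℝ) / N

lemma aseq_nonneg (N : ℕ) : 0 ≤ aseq N := by
  unfold aseq; positivity

lemma good_of_block {n k : ℕ} (h1 : 4 ^ (2 * k + 1) ≤ n + 1) (h2 : n + 1 < 4 ^ (2 * k + 2)) :
    good n := ⟨k, h1, h2⟩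

lemma good_small {n k : ℕ} (hg : good n) (hn : n + 1 ≤ 4 ^ (2 * k + 1)) :
    n + 1 ≤ 4 ^ (2 * k) ∨ n = 4 ^ (2 * k + 1) - 1 := by
  obtain ⟨j, hj1, hj2⟩ := hg
  rcases eq_or_lt_of_le hn with he | hlt
  · right; omega
  · left
    have hjk : 2 * j + 1 < 2 * k + 1 := by
      have : (4 : ℕ) ^ (2 * j + 1) < 4 ^ (2 * k + 1) := lt_of_le_of_lt hj1 hlt
      exact (Nat.pow_lt_pow_iff_right (by norm_num)).mp this
    have : 2 * j + 2 ≤ 2 * k := by omega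
    have hle : (4 : ℕ) ^ (2 * j + 2) ≤ 4 ^ (2 * k) :=
      Nat.pow_le_pow_right (by norm_num) this
    omega

/-- lower bound on the count at times `N = 2 * 4^(2k+2)`. -/
lemma count_lower (k : ℕ) :
    3 * 4 ^ (2 * k + 1) ≤ ((Finset.range (2 * 4 ^ (2 * k + 2))).filter cp).card := by
  set A := 4 ^ (2 * k + 1) with hA
  set B := 4 ^ (2 * k + 2) with hB
  have hA1 : 1 ≤ A := Nat.one_le_pow _ _ (by norm_num)
  have hAB : 4 * A = B := by rw [hA, hB, pow_succ]; ring
  have hcard : (Finset.Ico (A - 1) (B - 1)).card = 3 * A := by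
    rw [Nat.card_Ico]; omega
  rw [← hcard]
  apply Finset.card_le_card_of_injOn (fun n => 2 * n + 1)
  · intro n hn
    rw [Finset.mem_coe, Finset.mem_Ico] at hn
    show 2 * n + 1 ∈ _
    rw [Finset.mem_coe, Finset.mem_filter, Finset.mem_range]
    refine ⟨by omega, by omega, ?_⟩
    have h2 : (2 * n + 1) / 2 = n := by omega
    rw [h2]
    exact good_of_block (k := k) (by omega) (by omega)
  · intro a _ b _ hab
    have : 2 * a + 1 = 2 * b + 1 := hab
    omega

/-- upper bound on the count at times `N = 2 * 4^(2k+1)`. -/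
lemma count_upper (k : ℕ) :
    ((Finset.range (2 * 4 ^ (2 * k + 1))).filter cp).card ≤ 4 ^ (2 * k) + 1 := by
  set Q := 4 ^ (2 * k) with hQ
  set M := 4 ^ (2 * k + 1) with hM
  have hQM : 4 * Q = M := by rw [hQ, hM, pow_succ]; ring
  have htarget : ((Finset.range Q) ∪ {M - 1}).card ≤ Q + 1 := by
    calc ((Finset.range Q) ∪ {M - 1}).card
        ≤ (Finset.range Q).card + ({M - 1} : Finset ℕ).card := Finset.card_union_le _ _
      _ = Q + 1 := by simp
  refine le_trans ?_ htarget
  apply Finset.card_le_card_of_injOn (fun i => i / 2)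
  · intro i hi
    rw [Finset.mem_coe, Finset.mem_filter, Finset.mem_range] at hi
    obtain ⟨hiN, hodd, hgood⟩ := hi
    have hn : i / 2 + 1 ≤ M := by omega
    show i / 2 ∈ _
    rcases good_small hgood hn with h | h
    · rw [Finset.mem_coe, Finset.mem_union, Finset.mem_range]
      left; omega
    · rw [Finset.mem_coe, Finset.mem_union, Finset.mem_singleton]
      right; omega
  · intro a ha b hb hab
    have ha' : a % 2 = 1 := ((Finset.mem_filter.mp (Finset.mem_coe.mp ha)).2).1
    have hb' : b % 2 = 1 := ((Finset.mem_filter.mp (Finset.mem_coe.mp hb)).2).1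
    have hd : a / 2 = b / 2 := hab
    omega


lemma aseq_hi (k : ℕ) : (3 / 8 : ℝ) ≤ aseq (2 * 4 ^ (2 * k + 2)) := by
  have hc := count_lower k
  have hcR : (3 * 4 ^ (2 * k + 1) : ℝ) ≤
      (((Finset.range (2 * 4 ^ (2 * k + 2))).filter cp).card : ℝ) := by
    exact_mod_cast hc
  have hP : (0 : ℝ) < (4 : ℝ) ^ (2 * k + 1) := by positivity
  have hN : ((2 * 4 ^ (2 * k + 2) : ℕ) : ℝ) = 8 * (4 : ℝ) ^ (2 * k + 1) := by
    push_cast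
    rw [pow_succ]
    ring
  unfold aseq
  rw [le_div_iff₀ (by rw [hN]; positivity)]
  rw [hN]
  calc (3 / 8 : ℝ) * (8 * 4 ^ (2 * k + 1)) = 3 * 4 ^ (2 * k + 1) := by ring
    _ ≤ _ := hcR

lemma aseq_lo (k : ℕ) : aseq (2 * 4 ^ (2 * k + 1)) ≤ (1 / 4 : ℝ) := by
  have hc := count_upper k
  have h1 : (1 : ℕ) ≤ 4 ^ (2 * k) := Nat.one_le_pow _ _ (by norm_num)
  have hc2 : ((Finset.range (2 * 4 ^ (2 * k + 1))).filter cp).card ≤ 2 * 4 ^ (2 * k) := by omega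
  have hcR : ((((Finset.range (2 * 4 ^ (2 * k + 1))).filter cp).card : ℝ)) ≤
      2 * (4 : ℝ) ^ (2 * k) := by exact_mod_cast hc2
  have hN : ((2 * 4 ^ (2 * k + 1) : ℕ) : ℝ) = 8 * (4 : ℝ) ^ (2 * k) := by
    push_cast
    rw [pow_succ]
    ring
  unfold aseq
  rw [div_le_iff₀ (by rw [hN]; positivity), hN]
  calc ((((Finset.range (2 * 4 ^ (2 * k + 1))).filter cp).card : ℝ))
      ≤ 2 * (4 : ℝ) ^ (2 * k) := hcR
    _ = 1 / 4 * (8 * 4 ^ (2 * k)) := by ring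

lemma aseq_le_one (N : ℕ) : aseq N ≤ 1 := by
  unfold aseq
  rcases Nat.eq_zero_or_pos N with h | h
  · simp [h]
  · rw [div_le_one (by exact_mod_cast h)]
    exact_mod_cast (Finset.card_filter_le _ _).trans_eq (Finset.card_range N)

lemma nat_le_pow_aux (m : ℕ) : m ≤ 2 * 4 ^ m := by
  induction m with
  | zero => omega
  | succ n ih =>
    have : (4:ℕ) ^ n ≥ 1 := Nat.one_le_pow _ _ (by norm_num)
    calc n + 1 ≤ 2 * 4 ^ n + 1 := by omega
      _ ≤ 2 * 4 ^ (n + 1) := by rw [pow_succ]; omega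

lemma liminf_lt_limsup_aseq : liminf aseq atTop < limsup aseq atTop := by
  have hbdd_above : IsBoundedUnder (· ≤ ·) atTop aseq :=
    Filter.isBoundedUnder_of ⟨1, aseq_le_one⟩
  have hbdd_below : IsBoundedUnder (· ≥ ·) atTop aseq :=
    Filter.isBoundedUnder_of ⟨0, aseq_nonneg⟩
  have hlo : liminf aseq atTop ≤ 1 / 4 := by
    apply liminf_le_of_frequently_le _ hbdd_below
    rw [Filter.frequently_atTop]
    intro N0
    refine ⟨2 * 4 ^ (2 * N0 + 1), ?_, aseq_lo N0⟩
    calc N0 ≤ 2 * 4 ^ N0 := nat_le_pow_aux N0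
      _ ≤ 2 * 4 ^ (2 * N0 + 1) := by
          exact Nat.mul_le_mul_left _ (Nat.pow_le_pow_right (by norm_num) (by omega))
  have hhi : (3 / 8 : ℝ) ≤ limsup aseq atTop := by
    apply le_limsup_of_frequently_le _ hbdd_above
    rw [Filter.frequently_atTop]
    intro N0
    refine ⟨2 * 4 ^ (2 * N0 + 2), ?_, aseq_hi N0⟩
    calc N0 ≤ 2 * 4 ^ N0 := nat_le_pow_aux N0
      _ ≤ 2 * 4 ^ (2 * N0 + 2) := by
          exact Nat.mul_le_mul_left _ (Nat.pow_le_pow_right (by norm_num) (by omega))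
  calc liminf aseq atTop ≤ 1 / 4 := hlo
    _ < 3 / 8 := by norm_num
    _ ≤ limsup aseq atTop := hhi

lemma F_continuous (n : ℕ) : Continuous (F n) := by
  have hg : Continuous g0 := by
    apply continuous_pi
    intro n
    cases n with
    | zero => exact continuous_const
    | succ k => exact continuous_apply k
  have hh : Continuous h0 := continuous_pi fun n => continuous_apply (n + 1)
  unfold F
  split_ifs <;> first | exact hg | exact hh | exact continuous_id

/-- key pointwise identification of the indicator predicate for the original system. -/
lemma pred_iff (x y : ℕ → Bool) (hxy : x ≠ y) (t : ℝ)
    (ht : t ∈ Set.Ioo (dist x y / 2) (dist x y)) (i : ℕ) :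
    (dist (orb F i x) (orb F i y) < t) ↔ cp i := by
  obtain ⟨ht1, ht2⟩ := ht
  rcases Nat.even_or_odd i with ⟨m, hm⟩ | ⟨m, hm⟩
  · have : i = 2 * m := by omega
    subst this
    rw [orbF_even]
    constructor
    · intro h
      exact absurd (h.trans ht2) (lt_irrefl _)
    · intro h
      exact absurd h.1 (by omega)
  · have : i = 2 * m + 1 := by omega
    subst this
    rw [orbF_odd]
    have hm2 : (2 * m + 1) / 2 = m := by omega
    by_cases hg : good m
    · rw [if_pos hg]
      rw [show dist (g0 x) (g0 y) = dist x y / 2 from dist_g0 x y hxy]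
      constructor
      · intro _
        exact ⟨by omega, by rw [hm2]; exact hg⟩
      · intro _
        exact ht1
    · rw [if_neg hg]
      constructor
      · intro h
        exact absurd (h.trans ht2) (lt_irrefl _)
      · intro h
        have h2 : good ((2 * m + 1) / 2) := h.2
        rw [hm2] at h2
        exact absurd h2 hg

lemma dc3_id : DC3 F id := by
  refine ⟨Set.univ, ?_, ?_⟩
  · have : Uncountable (ℕ → Bool) := by
      rw [← not_countable_iff]
      intro h
      have : Countable (Set ℕ) :=
        Countable.of_equiv _ (Equiv.arrowCongr (Equiv.refl ℕ) Equiv.propEquivBool.symm)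
      obtain ⟨f, hf⟩ := exists_injective_nat (Set ℕ)
      exact Function.cantor_injective f hf
    exact Set.not_countable_univ
  · intro x _ y _ hxy
    refine ⟨dist x y / 2, dist x y, by
      have := dist_pos.mpr hxy
      linarith, ?_⟩
    intro t ht
    have hseq : (fun n => (((Finset.range n).filter
        (fun i => dist (orb F (id i) x) (orb F (id i) y) < t)).card : ℝ) / n) = aseq := by
      funext n
      unfold aseq
      congr 1
      norm_cast
      congr 1
      apply Finset.filter_congr
      intro i _
      simpa using pred_iff x y hxy t ht i
    rw [phiLow, phiUpp, hseq]
    exact liminf_lt_limsup_aseq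

lemma not_dc3_double : ¬ DC3 F (fun n => 2 * n) := by
  rintro ⟨S, hS, h⟩
  have hnt : ∃ x ∈ S, ∃ y ∈ S, x ≠ y := by
    by_contra hcon
    push_neg at hcon
    exact hS (Set.Subsingleton.countable (fun x hx y hy => by
      by_contra hne
      exact hne (hcon x hx y hy)))
  obtain ⟨x, hx, y, hy, hxy⟩ := hnt
  obtain ⟨c, d, hcd, ht⟩ := h x hx y hy hxy
  have hmem : (c + d) / 2 ∈ Set.Ioo c d := ⟨by linarith, by linarith⟩
  have hlt := ht _ hmem
  set t := (c + d) / 2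
  have hconst : ∀ n : ℕ, (((Finset.range n).filter
      (fun i => dist (orb F (2 * i) x) (orb F (2 * i) y) < t)).card : ℝ) / n
      = (if dist x y < t then 1 else 0) * ((Finset.range n).card : ℝ) / n := by
    intro n
    congr 1
    have : ∀ i, (dist (orb F (2 * i) x) (orb F (2 * i) y) < t) ↔ (dist x y < t) := by
      intro i
      rw [orbF_even]
      simp
    by_cases hq : dist x y < t
    · rw [if_pos hq, one_mul]
      congr 2
      rw [Finset.filter_true_of_mem]
      intro i _
      exact (this i).mpr hq
    · rw [if_neg hq, zero_mul]
      norm_cast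
      rw [Finset.filter_false_of_mem]
      · simp
      · intro i _
        exact fun hcon => hq ((this i).mp hcon)
  have htend : Tendsto (fun n : ℕ => (((Finset.range n).filter
      (fun i => dist (orb F (2 * i) x) (orb F (2 * i) y) < t)).card : ℝ) / n)
      atTop (nhds (if dist x y < t then 1 else 0)) := by
    have hev : (fun n : ℕ => (((Finset.range n).filter
        (fun i => dist (orb F (2 * i) x) (orb F (2 * i) y) < t)).card : ℝ) / n)
        =ᶠ[atTop] (fun _ => (if dist x y < t then 1 else 0 : ℝ)) := by
      filter_upwards [Filter.eventually_gt_atTop 0] with n hn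
      rw [hconst n, Finset.card_range]
      field_simp
    exact Tendsto.congr' hev.symm tendsto_const_nhds
  have h1 : phiLow F (fun n => 2 * n) x y t = (if dist x y < t then 1 else 0) := by
    rw [phiLow]
    exact htend.liminf_eq
  have h2 : phiUpp F (fun n => 2 * n) x y t = (if dist x y < t then 1 else 0) := by
    rw [phiUpp]
    exact htend.limsup_eq
  rw [h1, h2] at hlt
  exact lt_irrefl _ hlt

/-- There is a non-autonomous system on a compact metric space that is DC3 but whose
second iterate system is not DC3. -/
theorem stmt_14 :
    ∃ (X : Type) (_ : MetricSpace X) (_ : CompactSpace X) (f : ℕ → X → X),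
      (∀ n, Continuous (f n)) ∧ DC3 f id ∧ ¬ DC3 f (fun n => 2 * n) := by
  exact ⟨ℕ → Bool, PiNat.metricSpace, inferInstance, F, F_continuous, dc3_id, not_dc3_double⟩
end

section
/- Let (X,d) be a compact metric space and (f_n) a sequence of continuous self-maps converging uniformly to f. Let N ∈ ℕ and s > 0. Then there exists 0 < p < s such that for all x,y ∈ X: if d(f_1^{jN−i}(x), f_1^{jN−i}(y)) < p for some j ≥ 1 and 1 ≤ i ≤ N, then d(f_1^{jN}(x), f_1^{jN}(y)) < s. Consequently, for all n, N·(δ_n(f_{1,∞}^N, x, y, s) − 1) ≤ δ_{Nn}(f_{1,∞}, x, y, p), where δ_n counts the fraction of times 0 ≤ i < n at which the orbit distance is ≥ the given threshold. -/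
open Filter
open scoped Classical

variable {X : Type*}

/-- segment of the composition: `seg f m i = f_{m+i} ∘ ⋯ ∘ f_{m+1}` (0-based). -/
def seg (f : ℕ → X → X) : ℕ → ℕ → X → X
  | _, 0 => id
  | m, i + 1 => seg f (m + 1) i ∘ f m

lemma seg_orb (f : ℕ → X → X) : ∀ (i m : ℕ) (x : X),
    seg f m i (orb f m x) = orb f (m + i) x := by
  intro i
  induction i with
  | zero => intro m x; simp [seg]
  | succ i ih =>
    intro m x
    have : seg f m (i + 1) (orb f m x) = seg f (m + 1) i (f m (orb f m x)) := rfl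
    rw [this]
    have h2 : f m (orb f m x) = orb f (m + 1) x := rfl
    rw [h2, ih (m + 1) x]
    congr 1
    omega

/-- uniform equicontinuity of the family `{f n}`. -/
lemma unif_equi [MetricSpace X] [CompactSpace X] (f : ℕ → X → X) (g : X → X)
    (hf : ∀ n, Continuous (f n)) (hconv : TendstoUniformly f g atTop) :
    ∀ ε : ℝ, 0 < ε → ∃ δ : ℝ, 0 < δ ∧
      ∀ (n : ℕ) (x y : X), dist x y < δ → dist (f n x) (f n y) < ε := by
  intro ε hε
  have hg : Continuous g := hconv.continuous (Filter.Eventually.of_forall hf).frequently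
  have hgu : UniformContinuous g := CompactSpace.uniformContinuous_of_continuous hg
  -- choose M such that f n is ε/3-close to g for n ≥ M
  have hclose : ∀ᶠ n in atTop, ∀ x : X, dist (g x) (f n x) < ε / 3 :=
    Metric.tendstoUniformly_iff.mp hconv (ε / 3) (by linarith)
  obtain ⟨M, hM⟩ := Filter.eventually_atTop.mp hclose
  obtain ⟨δg, hδg, hδgP⟩ := Metric.uniformContinuous_iff.mp hgu (ε / 3) (by linarith)
  -- a single modulus for the finitely many n < M
  have hfin : ∀ K : ℕ, ∃ δ : ℝ, 0 < δ ∧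
      ∀ n < K, ∀ x y : X, dist x y < δ → dist (f n x) (f n y) < ε := by
    intro K
    induction K with
    | zero => exact ⟨1, one_pos, fun n hn => by omega⟩
    | succ K ih =>
      obtain ⟨δ1, hδ1, h1⟩ := ih
      obtain ⟨δ2, hδ2, h2⟩ := Metric.uniformContinuous_iff.mp
        (CompactSpace.uniformContinuous_of_continuous (hf K)) ε hε
      refine ⟨min δ1 δ2, lt_min hδ1 hδ2, fun n hn x y hxy => ?_⟩
      rcases Nat.lt_succ_iff_lt_or_eq.mp hn with h | h
      · exact h1 n h x y (lt_of_lt_of_le hxy (min_le_left _ _))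
      · subst h; exact h2 (lt_of_lt_of_le hxy (min_le_right _ _))
  obtain ⟨δ1, hδ1, h1⟩ := hfin M
  refine ⟨min δ1 δg, lt_min hδ1 hδg, fun n x y hxy => ?_⟩
  rcases lt_or_ge n M with h | h
  · exact h1 n h x y (lt_of_lt_of_le hxy (min_le_left _ _))
  · have hgx := hM n h x
    have hgy := hM n h y
    have hgxy := hδgP (lt_of_lt_of_le hxy (min_le_right _ _))
    calc dist (f n x) (f n y)
        ≤ dist (f n x) (g x) + dist (g x) (g y) + dist (g y) (f n y) :=
          dist_triangle4 _ _ _ _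
      _ < ε / 3 + ε / 3 + ε / 3 := by
          rw [dist_comm (f n x) (g x)]; linarith
      _ = ε := by ring

/-- uniform equicontinuity of all segments of length `≤ k`. -/
lemma seg_equi [MetricSpace X] [CompactSpace X] (f : ℕ → X → X) (g : X → X)
    (hf : ∀ n, Continuous (f n)) (hconv : TendstoUniformly f g atTop) :
    ∀ (k : ℕ) (ε : ℝ), 0 < ε → ∃ δ : ℝ, 0 < δ ∧ δ ≤ ε ∧
      ∀ (m i : ℕ), i ≤ k → ∀ x y : X, dist x y < δ →
        dist (seg f m i x) (seg f m i y) < ε := by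
  intro k
  induction k with
  | zero =>
    intro ε hε
    refine ⟨ε, hε, le_refl _, fun m i hi x y hxy => ?_⟩
    interval_cases i
    simpa [seg] using hxy
  | succ k ih =>
    intro ε hε
    obtain ⟨δ, hδ, hδε, hP⟩ := ih ε hε
    obtain ⟨δ', hδ', hP'⟩ := unif_equi f g hf hconv δ hδ
    refine ⟨min δ δ', lt_min hδ hδ', le_trans (min_le_left _ _) hδε,
      fun m i hi x y hxy => ?_⟩
    rcases Nat.lt_succ_iff_lt_or_eq.mp (Nat.lt_succ_of_le hi) with h | h
    · exact hP m i (Nat.lt_succ_iff.mp h) x y (lt_of_lt_of_le hxy (min_le_left _ _))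
    · subst h
      have hfm : dist (f m x) (f m y) < δ :=
        hP' m x y (lt_of_lt_of_le hxy (min_le_right _ _))
      exact hP (m + 1) k (le_refl k) (f m x) (f m y) hfm

theorem stmt_18 [MetricSpace X] [CompactSpace X] (f : ℕ → X → X) (g : X → X)
    (hf : ∀ n, Continuous (f n)) (hconv : TendstoUniformly f g atTop)
    (N : ℕ) (hN : 0 < N) (s : ℝ) (hs : 0 < s) :
    ∃ p : ℝ, 0 < p ∧ p < s ∧
      (∀ x y : X, ∀ j : ℕ, 1 ≤ j → ∀ i : ℕ, 1 ≤ i → i ≤ N →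
        dist (orb f (j * N - i) x) (orb f (j * N - i) y) < p →
        dist (orb f (j * N) x) (orb f (j * N) y) < s) ∧
      ∀ x y : X, ∀ n : ℕ,
        (N : ℤ) * ((((Finset.range n).filter
            (fun i => s ≤ dist (orb f (N * i) x) (orb f (N * i) y))).card : ℤ) - 1)
          ≤ (((Finset.range (N * n)).filter
            (fun i => p ≤ dist (orb f i x) (orb f i y))).card : ℤ) := by
  obtain ⟨δ, hδ, hδs, hP⟩ := seg_equi f g hf hconv N s hs
  set p := min δ (s / 2) with hp
  have hp0 : 0 < p := lt_min hδ (by linarith)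
  have hps : p < s := lt_of_le_of_lt (min_le_right _ _) (by linarith)
  have part1 : ∀ x y : X, ∀ j : ℕ, 1 ≤ j → ∀ i : ℕ, 1 ≤ i → i ≤ N →
      dist (orb f (j * N - i) x) (orb f (j * N - i) y) < p →
      dist (orb f (j * N) x) (orb f (j * N) y) < s := by
    intro x y j hj i hi1 hiN hd
    set m := j * N - i with hm
    have hiN' : i ≤ j * N := le_trans hiN (Nat.le_mul_of_pos_left N hj)
    have hmi : m + i = j * N := by omega
    have hx : orb f (j * N) x = seg f m i (orb f m x) := by rw [seg_orb, hmi]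
    have hy : orb f (j * N) y = seg f m i (orb f m y) := by rw [seg_orb, hmi]
    rw [hx, hy]
    exact hP m i hiN _ _ (lt_of_lt_of_le hd (min_le_left _ _))
  refine ⟨p, hp0, hps, part1, ?_⟩
  intro x y n
  set S := (Finset.range n).filter
    (fun i => s ≤ dist (orb f (N * i) x) (orb f (N * i) y)) with hS
  set T := (Finset.range (N * n)).filter
    (fun i => p ≤ dist (orb f i x) (orb f i y)) with hT
  set A := S.erase 0 with hA
  -- each j in A contributes a block of N indices to T
  have hblock : ∀ j ∈ A, Finset.Ico ((j - 1) * N) (j * N) ⊆ T := by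
    intro j hj q hq
    have hj0 : j ≠ 0 := Finset.ne_of_mem_erase hj
    have hjS : j ∈ S := Finset.mem_of_mem_erase hj
    obtain ⟨hjn, hjd⟩ := Finset.mem_filter.mp hjS
    have hjn' : j < n := Finset.mem_range.mp hjn
    obtain ⟨hq1, hq2⟩ := Finset.mem_Ico.mp hq
    have hj1 : 1 ≤ j := Nat.one_le_iff_ne_zero.mpr hj0
    -- q = j * N - i with 1 ≤ i ≤ N
    set i := j * N - q with hi
    have hjN : (j - 1) * N + N = j * N := by
      cases j with
      | zero => omega
      | succ k => simp [Nat.succ_mul]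
    have hi1 : 1 ≤ i := by omega
    have hiN : i ≤ N := by omega
    have hqeq : q = j * N - i := by omega
    rw [hT, Finset.mem_filter, Finset.mem_range]
    constructor
    · have hmn : j * N ≤ n * N := Nat.mul_le_mul_right N (le_of_lt hjn')
      rw [mul_comm]
      omega
    · by_contra hcon
      push_neg at hcon
      have := part1 x y j hj1 i hi1 hiN (by rw [← hqeq]; exact hcon)
      rw [mul_comm N j] at hjd
      linarith
  have hdisj : ∀ j ∈ A, ∀ j' ∈ A, j ≠ j' →
      Disjoint (Finset.Ico ((j - 1) * N) (j * N)) (Finset.Ico ((j' - 1) * N) (j' * N)) := by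
    intro j hj j' hj' hne
    have hj1 : 1 ≤ j := Nat.one_le_iff_ne_zero.mpr (Finset.ne_of_mem_erase hj)
    have hj1' : 1 ≤ j' := Nat.one_le_iff_ne_zero.mpr (Finset.ne_of_mem_erase hj')
    rw [Finset.disjoint_left]
    intro q hq hq'
    obtain ⟨ha, hb⟩ := Finset.mem_Ico.mp hq
    obtain ⟨ha', hb'⟩ := Finset.mem_Ico.mp hq'
    rcases lt_or_gt_of_ne hne with h | h
    · have : j * N ≤ (j' - 1) * N := Nat.mul_le_mul_right N (by omega)
      omega
    · have : j' * N ≤ (j - 1) * N := Nat.mul_le_mul_right N (by omega)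
      omega
  have hsub : A.biUnion (fun j => Finset.Ico ((j - 1) * N) (j * N)) ⊆ T := by
    intro q hq
    obtain ⟨j, hj, hqj⟩ := Finset.mem_biUnion.mp hq
    exact hblock j hj hqj
  have hcard : (A.biUnion (fun j => Finset.Ico ((j - 1) * N) (j * N))).card = A.card * N := by
    rw [Finset.card_biUnion hdisj]
    have hc : ∀ j ∈ A, (Finset.Ico ((j - 1) * N) (j * N)).card = N := by
      intro j hj
      have hj1 : 1 ≤ j := Nat.one_le_iff_ne_zero.mpr (Finset.ne_of_mem_erase hj)
      rw [Nat.card_Ico]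
      cases j with
      | zero => omega
      | succ k => simp [Nat.succ_mul]
    rw [Finset.sum_congr rfl hc, Finset.sum_const, smul_eq_mul]
  have hTcard : A.card * N ≤ T.card := by
    rw [← hcard]
    exact Finset.card_le_card hsub
  have hAcard : S.card - 1 ≤ A.card := Finset.pred_card_le_card_erase
  -- conclude over ℤ
  have h1 : (S.card - 1) * N ≤ T.card := le_trans (Nat.mul_le_mul_right N hAcard) hTcard
  have h2 : ((S.card - 1 : ℕ) : ℤ) * N ≤ (T.card : ℤ) := by exact_mod_cast h1
  have h3 : (N : ℤ) * ((S.card : ℤ) - 1) ≤ ((S.card - 1 : ℕ) : ℤ) * N := by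
    rw [mul_comm]
    apply mul_le_mul_of_nonneg_right _ (by positivity)
    omega
  exact le_trans h3 h2
end

section
/- Let (X,d) be a compact metric space, (f_n) continuous self-maps, x,y ∈ X, N ∈ ℕ, and suppose 0 < t₁ < t satisfies: d(u,v) < t₁ implies d(f_m^i(u), f_m^i(v)) < t for all m ∈ ℕ and 1 ≤ i ≤ N. Then for every l ∈ ℕ, #{0 ≤ i < N·m_l : d(f_1^i(x), f_1^i(y)) < t} ≥ N·#{0 ≤ i < m_l : d(f_1^{iN}(x), f_1^{iN}(y)) < t₁} for every m_l ∈ ℕ. Consequently, Φ*(f_{1,∞}, x, y, t) ≥ Φ*(f_{1,∞}^N, x, y, t₁). -/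
open Filter
open scoped Classical

variable {X : Type*}

/-- `compFrom f m k = f_{m+k-1} ∘ ⋯ ∘ f_m` (0-based indexing of the sequence `f`). -/
def compFrom (f : ℕ → X → X) (m : ℕ) : ℕ → X → X
  | 0 => id
  | k + 1 => f (m + k) ∘ compFrom f m k

lemma orb_add_s19 (f : ℕ → X → X) (m k : ℕ) (x : X) :
    orb f (m + k) x = compFrom f m k (orb f m x) := by
  induction k with
  | zero => rfl
  | succ k ih => simp [orb, compFrom, ih]

theorem stmt_19 [MetricSpace X] [CompactSpace X] (f : ℕ → X → X)
    (hf : ∀ n, Continuous (f n)) (x y : X) (N : ℕ) (hN : 0 < N)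
    (t₁ t : ℝ) (h0 : 0 < t₁) (h1 : t₁ < t)
    (hequi : ∀ u v : X, dist u v < t₁ → ∀ m : ℕ, ∀ i : ℕ, 1 ≤ i → i ≤ N →
      dist (compFrom f m i u) (compFrom f m i v) < t) :
    (∀ m : ℕ,
      N * ((Finset.range m).filter
          (fun i => dist (orb f (i * N) x) (orb f (i * N) y) < t₁)).card
        ≤ ((Finset.range (N * m)).filter
          (fun i => dist (orb f i x) (orb f i y) < t)).card) ∧
    phiUpp f (fun i => N * i) x y t₁ ≤ phiUpp f id x y t := by
  have part1 : ∀ m : ℕ,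
      N * ((Finset.range m).filter
          (fun i => dist (orb f (i * N) x) (orb f (i * N) y) < t₁)).card
        ≤ ((Finset.range (N * m)).filter
          (fun i => dist (orb f i x) (orb f i y) < t)).card := by
    intro m
    set S := (Finset.range m).filter
      (fun i => dist (orb f (i * N) x) (orb f (i * N) y) < t₁) with hS
    set T := (Finset.range (N * m)).filter
      (fun i => dist (orb f i x) (orb f i y) < t) with hT
    have hsub : S.biUnion (fun i => Finset.Ico (i * N) (i * N + N)) ⊆ T := by
      intro j hj
      simp only [Finset.mem_biUnion] at hj
      obtain ⟨i, hiS, hj⟩ := hj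
      rw [Finset.mem_Ico] at hj
      rw [hS, Finset.mem_filter, Finset.mem_range] at hiS
      rw [hT, Finset.mem_filter, Finset.mem_range]
      refine ⟨?_, ?_⟩
      · calc j < i * N + N := hj.2
          _ = (i + 1) * N := by ring
          _ ≤ m * N := Nat.mul_le_mul_right _ hiS.1
          _ = N * m := Nat.mul_comm _ _
      · obtain ⟨s, hs⟩ := Nat.exists_eq_add_of_le hj.1
        have hsN : s < N := by omega
        rcases Nat.eq_zero_or_pos s with h0s | h0s
        · subst h0s
          simp only [Nat.add_zero] at hs
          rw [hs]
          exact lt_trans hiS.2 h1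
        · have := hequi _ _ hiS.2 (i * N) s h0s (le_of_lt hsN)
          rw [hs, orb_add_s19, orb_add_s19]
          exact this
    have hdisj : ∀ i ∈ S, ∀ j ∈ S, i ≠ j →
        Disjoint (Finset.Ico (i * N) (i * N + N)) (Finset.Ico (j * N) (j * N + N)) := by
      intro i _ j _ hij
      rw [Finset.disjoint_left]
      intro k hk1 hk2
      rw [Finset.mem_Ico] at hk1 hk2
      rcases Nat.lt_or_ge i j with h | h
      · have : i * N + N ≤ j * N := by
          calc i * N + N = (i + 1) * N := by ring
            _ ≤ j * N := Nat.mul_le_mul_right _ h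
        omega
      · have hji : j < i := lt_of_le_of_ne h (Ne.symm hij)
        have : j * N + N ≤ i * N := by
          calc j * N + N = (j + 1) * N := by ring
            _ ≤ i * N := Nat.mul_le_mul_right _ hji
        omega
    calc N * S.card = ∑ i ∈ S, (Finset.Ico (i * N) (i * N + N)).card := by
          simp [Finset.sum_const, Nat.mul_comm]
      _ = (S.biUnion (fun i => Finset.Ico (i * N) (i * N + N))).card :=
          (Finset.card_biUnion hdisj).symm
      _ ≤ T.card := Finset.card_le_card hsub
  refine ⟨part1, ?_⟩
  set B : ℕ → ℝ := fun n => (((Finset.range n).filter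
      (fun i => dist (orb f i x) (orb f i y) < t)).card : ℝ) / n with hB
  set A : ℕ → ℝ := fun n => (((Finset.range n).filter
      (fun i => dist (orb f (N * i) x) (orb f (N * i) y) < t₁)).card : ℝ) / n with hA
  have hB0 : ∀ n, 0 ≤ B n := fun n => by positivity
  have hB1 : ∀ n, B n ≤ 1 := by
    intro n
    rcases Nat.eq_zero_or_pos n with rfl | hn
    · simp [hB]
    · rw [hB]
      rw [div_le_one (by exact_mod_cast hn)]
      exact_mod_cast (Finset.card_filter_le _ _).trans_eq (Finset.card_range n)
  have hA0 : ∀ n, 0 ≤ A n := fun n => by positivity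
  have hAB : ∀ m, A m ≤ B (N * m) := by
    intro m
    rcases Nat.eq_zero_or_pos m with rfl | hm
    · simp [hA, hB]
    have key := part1 m
    have hfilt : ((Finset.range m).filter
        (fun i => dist (orb f (N * i) x) (orb f (N * i) y) < t₁)).card
        = ((Finset.range m).filter
        (fun i => dist (orb f (i * N) x) (orb f (i * N) y) < t₁)).card := by
      congr 1
      apply Finset.filter_congr
      intro i _
      rw [Nat.mul_comm]
    simp only [hA, hB]
    rw [hfilt]
    rw [div_le_div_iff₀ (by exact_mod_cast hm) (by positivity)]
    have keyR : (N : ℝ) * ((Finset.range m).filter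
        (fun i => dist (orb f (i * N) x) (orb f (i * N) y) < t₁)).card
        ≤ ((Finset.range (N * m)).filter
        (fun i => dist (orb f i x) (orb f i y) < t)).card := by exact_mod_cast key
    have hm0 : (0 : ℝ) ≤ (m : ℝ) := Nat.cast_nonneg m
    push_cast
    nlinarith [mul_le_mul_of_nonneg_right keyR hm0]
  have hphiA : phiUpp f (fun i => N * i) x y t₁ = limsup A atTop := rfl
  have hphiB : phiUpp f id x y t = limsup B atTop := rfl
  rw [hphiA, hphiB]
  have step1 : limsup A atTop ≤ limsup (fun m => B (N * m)) atTop := by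
    refine limsup_le_limsup (Eventually.of_forall hAB) ?_ ?_
    · exact isCoboundedUnder_le_of_le atTop hA0
    · exact isBoundedUnder_of ⟨1, fun m => hB1 (N * m)⟩
  have hu : Tendsto (fun m => N * m) atTop atTop := by
    apply tendsto_atTop_mono (fun m => Nat.le_mul_of_pos_left m hN)
    exact tendsto_id
  have step2 : limsup (fun m => B (N * m)) atTop ≤ limsup B atTop := by
    have heq : limsup (fun m => B (N * m)) atTop = limsup B (map (fun m => N * m) atTop) := by
      rw [Filter.limsup, Filter.limsup, Filter.map_map]
      rfl
    rw [heq]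
    refine limsup_le_limsup_of_le hu ?_ ?_
    · exact isCoboundedUnder_le_of_le _ hB0
    · exact isBoundedUnder_of ⟨1, hB1⟩
  exact step1.trans step2
end
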